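/- arXiv:1412.2609 — 6 statements merged into one kernel-verified Lean document; each statement's English description precedes it below -/
import Mathlib

section
/- Let (v_n)_{n≥1} be a sequence of real numbers such that the power series ∑_{n≥1} v_n t^n has radius of convergence ρ > 0. For an integer m ≥ 1 and a complex number z with |z| < ρ, put ψ_{m,v}(z) = ∑_{n=1}^{∞} v_{mn}·z^{mn}, and write ψ_v = ψ_{1,v}. Then for every real number t with 0 < t < ρ/q, all the series below converge absolutely and ∑_{f=1}^{∞} f·Φ_f·ψ_{f,v}(t) = ψ_v(t) + ψ_v(q·t) − ∑_{j=1}^{2g} ψ_v(√q·ω_j·t). -/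
/-- Every element of the sigma type over divisor antidiagonals is determined by the pair. -/
private lemma divSigma_eq (p q : Σ N : ℕ, {x : ℕ × ℕ // x ∈ Nat.divisorsAntidiagonal N})
    (h : (p.2 : ℕ × ℕ) = (q.2 : ℕ × ℕ)) : p = q := by
  obtain ⟨N, ⟨x, hx⟩⟩ := p
  obtain ⟨M, ⟨y, hy⟩⟩ := q
  simp only at h
  subst h
  rw [Nat.mem_divisorsAntidiagonal] at hx hy
  have : N = M := by rw [← hx.1, hy.1]
  subst this
  rfl

private def divEquiv : (Σ N : ℕ, {x : ℕ × ℕ // x ∈ Nat.divisorsAntidiagonal N}) ≃ ℕ × ℕ where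
  toFun s := (s.2.1.1 - 1, s.2.1.2 - 1)
  invFun p := ⟨(p.1 + 1) * (p.2 + 1), ⟨(p.1 + 1, p.2 + 1), by
    rw [Nat.mem_divisorsAntidiagonal]; exact ⟨rfl, by positivity⟩⟩⟩
  left_inv := by
    rintro ⟨N, ⟨⟨a, b⟩, h⟩⟩
    rw [Nat.mem_divisorsAntidiagonal] at h
    obtain ⟨h1, h2⟩ := h
    have ha0 : a ≠ 0 := by rintro rfl; exact h2 (by simpa using h1.symm)
    have hb0 : b ≠ 0 := by rintro rfl; exact h2 (by simpa using h1.symm)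
    apply divSigma_eq
    simp only
    simp only [Prod.mk.injEq]
    omega
  right_inv p := by simp

theorem explicit_formula (q g : ℕ) (hq : 2 ≤ q) (hg : 1 ≤ g)
    (ω : Fin (2 * g) → ℂ) (hω : ∀ j, ‖ω j‖ = 1)
    (hconj : Multiset.map (starRingEnd ℂ) (List.ofFn ω : Multiset ℂ) = (List.ofFn ω : Multiset ℂ))
    (NF : ℕ → ℝ)
    (hNF : ∀ f : ℕ, 1 ≤ f →
      (NF f : ℂ) = (q : ℂ) ^ f + 1 - (Real.sqrt q : ℂ) ^ f * ∑ j, ω j ^ f)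
    (Φ : ℕ → ℕ)
    (hΦ : ∀ n : ℕ, 1 ≤ n → (∑ d ∈ n.divisors, (d * Φ d : ℝ)) = NF n)
    (v : ℕ → ℝ) (ρ : ℝ) (hρ : 0 < ρ)
    (hconv : ∀ z : ℂ, ‖z‖ < ρ → Summable (fun n : ℕ => ‖(v n : ℂ) * z ^ n‖))
    (ψ : ℕ → ℂ → ℂ)
    (hψ : ∀ m : ℕ, ∀ z : ℂ, ψ m z = ∑' n : ℕ, (v (m * (n + 1)) : ℂ) * z ^ (m * (n + 1)))
    (t : ℝ) (ht0 : 0 < t) (ht : t < ρ / q) :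
    (∀ m : ℕ, 1 ≤ m → ∀ z : ℂ, ‖z‖ ≤ (q : ℝ) * t →
      Summable (fun n : ℕ => ‖(v (m * (n + 1)) : ℂ) * z ^ (m * (n + 1))‖)) ∧
    Summable (fun f : ℕ => ‖((f : ℂ) + 1) * ((Φ (f + 1) : ℕ) : ℂ) * ψ (f + 1) (t : ℂ)‖) ∧
    ∑' f : ℕ, ((f : ℂ) + 1) * ((Φ (f + 1) : ℕ) : ℂ) * ψ (f + 1) (t : ℂ) =
      ψ 1 (t : ℂ) + ψ 1 ((q : ℂ) * t) - ∑ j, ψ 1 ((Real.sqrt q : ℂ) * ω j * t) := by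
  classical
  have hq1 : (1 : ℝ) ≤ (q : ℝ) := by exact_mod_cast Nat.one_le_of_lt hq
  have hq0 : (0 : ℝ) < (q : ℝ) := by linarith
  have hr : (q : ℝ) * t < ρ := by
    have := (lt_div_iff₀ hq0).mp ht
    linarith
  have hqt0 : (0 : ℝ) < (q : ℝ) * t := by positivity
  -- Part 1
  have part1 : ∀ m : ℕ, 1 ≤ m → ∀ z : ℂ, ‖z‖ ≤ (q : ℝ) * t →
      Summable (fun n : ℕ => ‖(v (m * (n + 1)) : ℂ) * z ^ (m * (n + 1))‖) := by
    intro m hm z hz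
    have h := hconv z (lt_of_le_of_lt hz hr)
    have hinj : Function.Injective (fun n : ℕ => m * (n + 1)) := by
      intro a b hab
      simp only at hab
      have := Nat.eq_of_mul_eq_mul_left (by omega : 0 < m) hab
      omega
    exact h.comp_injective hinj
  refine ⟨part1, ?_⟩
  -- summability of the nicer single series
  have habs_t : ‖(t : ℂ)‖ ≤ (q : ℝ) * t := by
    rw [Complex.norm_real, Real.norm_of_nonneg ht0.le]; nlinarith
  have habs_qt : ‖(q : ℂ) * (t : ℂ)‖ ≤ (q : ℝ) * t := by
    rw [norm_mul, Complex.norm_natCast, Complex.norm_real, Real.norm_of_nonneg ht0.le]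
  have hsqrt_le : Real.sqrt q ≤ (q : ℝ) := by
    have h1 : (q : ℝ) ≤ (q : ℝ) ^ 2 := by nlinarith
    have := Real.sqrt_le_sqrt h1
    rwa [Real.sqrt_sq hq0.le] at this
  have habs_w : ∀ j, ‖(Real.sqrt q : ℂ) * ω j * (t : ℂ)‖ ≤ (q : ℝ) * t := by
    intro j
    rw [norm_mul, norm_mul, Complex.norm_real, Complex.norm_real, hω j,
      Real.norm_of_nonneg (Real.sqrt_nonneg _), Real.norm_of_nonneg ht0.le, mul_one]
    exact mul_le_mul_of_nonneg_right hsqrt_le ht0.le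
  have hsummt : ∀ z : ℂ, ‖z‖ ≤ (q : ℝ) * t →
      Summable (fun n : ℕ => (v (n + 1) : ℂ) * z ^ (n + 1)) := by
    intro z hz
    have h := part1 1 le_rfl z hz
    simp only [one_mul] at h
    exact h.of_norm
  have hψ1 : ∀ z : ℂ, ψ 1 z = ∑' n : ℕ, (v (n + 1) : ℂ) * z ^ (n + 1) := by
    intro z
    rw [hψ 1 z]
    simp only [one_mul]
  -- bound on NF
  have hNF_le : ∀ f : ℕ, 1 ≤ f → NF f ≤ (2 + 2 * (g : ℝ)) * (q : ℝ) ^ f := by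
    intro f hf
    have hre : NF f = (q : ℝ) ^ f + 1 - Real.sqrt q ^ f * (∑ j, ω j ^ f).re := by
      have h2 := congrArg Complex.re (hNF f hf)
      rw [show ((Real.sqrt q : ℂ)) ^ f = ((Real.sqrt q ^ f : ℝ) : ℂ) by push_cast; ring,
        show ((q : ℂ)) ^ f = (((q : ℝ) ^ f : ℝ) : ℂ) by push_cast; ring] at h2
      simp only [Complex.sub_re, Complex.add_re, Complex.one_re, Complex.ofReal_re,
        Complex.re_ofReal_mul] at h2
      exact h2
    have hS : |(∑ j, ω j ^ f).re| ≤ 2 * (g : ℝ) := by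
      calc |(∑ j, ω j ^ f).re| ≤ ‖∑ j, ω j ^ f‖ := Complex.abs_re_le_norm _
        _ ≤ ∑ j, ‖ω j ^ f‖ := by
            simpa using norm_sum_le (Finset.univ : Finset (Fin (2 * g))) (fun j => ω j ^ f)
        _ = 2 * (g : ℝ) := by
            simp [norm_pow, hω]
    have hpow : Real.sqrt q ^ f ≤ (q : ℝ) ^ f :=
      pow_le_pow_left₀ (Real.sqrt_nonneg _) hsqrt_le f
    have hpow0 : (0 : ℝ) ≤ Real.sqrt q ^ f := by positivity
    have h1q : (1 : ℝ) ≤ (q : ℝ) ^ f := by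
      have := pow_le_pow_left₀ zero_le_one hq1 f
      rwa [one_pow] at this
    obtain ⟨hS1, hS2⟩ := abs_le.mp hS
    have hg0 : (0 : ℝ) ≤ 2 * (g : ℝ) := by positivity
    have hm1 : Real.sqrt q ^ f * (-(2 * (g : ℝ))) ≤ Real.sqrt q ^ f * (∑ j, ω j ^ f).re :=
      mul_le_mul_of_nonneg_left hS1 hpow0
    have hm2 : Real.sqrt q ^ f * (2 * (g : ℝ)) ≤ (q : ℝ) ^ f * (2 * (g : ℝ)) :=
      mul_le_mul_of_nonneg_right hpow hg0
    rw [hre]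
    nlinarith [hm1, hm2]
  -- d * Φ d ≤ NF for the top divisor
  have hfΦ : ∀ f : ℕ, 1 ≤ f → ((f * Φ f : ℕ) : ℝ) ≤ NF f := by
    intro f hf
    rw [← hΦ f hf]
    have hmem : f ∈ f.divisors := Nat.mem_divisors_self f (by omega)
    have := Finset.single_le_sum (f := fun d : ℕ => (d : ℝ) * (Φ d : ℝ))
      (fun d _ => by positivity) hmem
    calc ((f * Φ f : ℕ) : ℝ) = (f : ℝ) * (Φ f : ℝ) := by push_cast; ring
      _ ≤ ∑ d ∈ f.divisors, (d * Φ d : ℝ) := this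
  -- the double series
  set F : ℕ × ℕ → ℂ := fun p =>
    (((p.1 + 1) * Φ (p.1 + 1) : ℕ) : ℂ) *
      ((v ((p.1 + 1) * (p.2 + 1)) : ℂ) * (t : ℂ) ^ ((p.1 + 1) * (p.2 + 1))) with hF
  set X : ℕ → ℂ := fun N => (v N : ℂ) * (t : ℂ) ^ N with hX
  set R : ℕ → ℝ := fun N => ∑ d ∈ N.divisors, ((d * Φ d : ℕ) : ℝ) with hR
  set U : ℕ → ℝ := fun N => ‖(v N : ℂ) * ((((q : ℝ) * t : ℝ)) : ℂ) ^ N‖ with hUdef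
  have hU : Summable U := by
    apply hconv
    rw [Complex.norm_real, Real.norm_of_nonneg hqt0.le]
    exact hr
  have hU0 : ∀ N, 0 ≤ U N := fun N => norm_nonneg _
  have hR0 : ∀ N, 0 ≤ R N := fun N => Finset.sum_nonneg fun d _ => by positivity
  have hqX : ∀ N : ℕ, (q : ℝ) ^ N * ‖X N‖ = U N := by
    intro N
    simp only [hX, hUdef, norm_mul, norm_pow, Complex.norm_real, Real.norm_eq_abs,
      abs_of_pos ht0, abs_of_pos hqt0, abs_of_pos hq0, mul_pow]
    ring
  have hRX : ∀ N : ℕ, R N * ‖X N‖ ≤ (2 + 2 * (g : ℝ)) * U N := by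
    intro N
    rcases Nat.eq_zero_or_pos N with rfl | hN
    · have : R 0 = 0 := by simp [hR]
      rw [this, zero_mul]
      exact mul_nonneg (by positivity) (hU0 0)
    · have h1 : R N = NF N := by
        rw [hR, ← hΦ N hN]
        push_cast
        rfl
      rw [h1]
      calc NF N * ‖X N‖ ≤ ((2 + 2 * (g : ℝ)) * (q : ℝ) ^ N) * ‖X N‖ :=
            mul_le_mul_of_nonneg_right (hNF_le N hN) (norm_nonneg _)
        _ = (2 + 2 * (g : ℝ)) * U N := by rw [← hqX N]; ring
  -- evaluating F on fibers
  have hFdiv : ∀ (N : ℕ) (x : {x : ℕ × ℕ // x ∈ Nat.divisorsAntidiagonal N}),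
      F (divEquiv ⟨N, x⟩) = ((x.1.1 * Φ x.1.1 : ℕ) : ℂ) * X N := by
    rintro N ⟨⟨a, b⟩, hx⟩
    rw [Nat.mem_divisorsAntidiagonal] at hx
    obtain ⟨h1, h2⟩ := hx
    have h1' : a * b = N := h1
    have ha0 : a ≠ 0 := by rintro rfl; exact h2 (by simpa using h1'.symm)
    have hb0 : b ≠ 0 := by rintro rfl; exact h2 (by simpa using h1'.symm)
    have ha : a - 1 + 1 = a := by omega
    have hb : b - 1 + 1 = b := by omega
    show F (a - 1, b - 1) = _
    simp only [hF, hX]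
    rw [ha, hb, h1']
  have hfibN : ∀ N : ℕ, (∑' x : {x : ℕ × ℕ // x ∈ Nat.divisorsAntidiagonal N},
      ‖F (divEquiv ⟨N, x⟩)‖) = R N * ‖X N‖ := by
    intro N
    have h1 : ∀ x : {x : ℕ × ℕ // x ∈ Nat.divisorsAntidiagonal N},
        ‖F (divEquiv ⟨N, x⟩)‖ = ((x.1.1 * Φ x.1.1 : ℕ) : ℝ) * ‖X N‖ := by
      intro x
      rw [hFdiv N x, norm_mul, Complex.norm_natCast]
    rw [tsum_congr h1,
      Finset.tsum_subtype (Nat.divisorsAntidiagonal N)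
        (fun p => ((p.1 * Φ p.1 : ℕ) : ℝ) * ‖X N‖),
      ← Finset.sum_mul]
    congr 1
    rw [Nat.sum_divisorsAntidiagonal (f := fun a _ => ((a * Φ a : ℕ) : ℝ)), hR]
  have hfibC : ∀ N : ℕ, (∑' x : {x : ℕ × ℕ // x ∈ Nat.divisorsAntidiagonal N},
      F (divEquiv ⟨N, x⟩)) = ((R N : ℝ) : ℂ) * X N := by
    intro N
    rw [tsum_congr (hFdiv N),
      Finset.tsum_subtype (Nat.divisorsAntidiagonal N)
        (fun p => ((p.1 * Φ p.1 : ℕ) : ℂ) * X N),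
      ← Finset.sum_mul]
    congr 1
    rw [Nat.sum_divisorsAntidiagonal (f := fun a _ => ((a * Φ a : ℕ) : ℂ)), hR]
    push_cast
    rfl
  -- summability of the double series
  have hsig : Summable (fun s : Σ N : ℕ, {x : ℕ × ℕ // x ∈ Nat.divisorsAntidiagonal N} =>
      ‖F (divEquiv s)‖) := by
    rw [summable_sigma_of_nonneg (fun _ => norm_nonneg _)]
    refine ⟨fun N => Summable.of_finite, ?_⟩
    refine Summable.of_nonneg_of_le (fun N => tsum_nonneg fun x => norm_nonneg _)
      (fun N => ?_) (hU.mul_left (2 + 2 * (g : ℝ)))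
    rw [hfibN N]
    exact hRX N
  have hFnorm : Summable fun p : ℕ × ℕ => ‖F p‖ := by
    exact (Equiv.summable_iff divEquiv (f := fun p : ℕ × ℕ => ‖F p‖)).mp hsig
  have hFsum : Summable F := hFnorm.of_norm
  have hsigC : Summable (fun s : Σ N : ℕ, {x : ℕ × ℕ // x ∈ Nat.divisorsAntidiagonal N} =>
      F (divEquiv s)) := by
    exact (Equiv.summable_iff divEquiv (f := F)).mpr hFsum
  -- rewriting the terms of the series
  have hterm : ∀ f : ℕ, ((f : ℂ) + 1) * ((Φ (f + 1) : ℕ) : ℂ) * ψ (f + 1) (t : ℂ)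
      = ∑' n : ℕ, F (f, n) := by
    intro f
    rw [hψ (f + 1) (t : ℂ), ← tsum_mul_left]
    refine tsum_congr fun n => ?_
    simp only [hF]
    push_cast
    ring
  have hprod := (summable_prod_of_nonneg (f := fun p : ℕ × ℕ => ‖F p‖)
    (fun p => norm_nonneg (F p))).mp hFnorm
  have part2 : Summable (fun f : ℕ =>
      ‖((f : ℂ) + 1) * ((Φ (f + 1) : ℕ) : ℂ) * ψ (f + 1) (t : ℂ)‖) := by
    refine Summable.of_nonneg_of_le (fun _ => norm_nonneg _) (fun f => ?_) hprod.2
    rw [hterm f]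
    exact norm_tsum_le_tsum_norm (hprod.1 f)
  refine ⟨part2, ?_⟩
  -- summability of the single series
  have hT : Summable (fun N : ℕ => ((R N : ℝ) : ℂ) * X N) := by
    refine Summable.of_norm (Summable.of_nonneg_of_le (fun N => norm_nonneg _)
      (fun N => ?_) (hU.mul_left (2 + 2 * (g : ℝ))))
    rw [norm_mul, Complex.norm_real, Real.norm_eq_abs, abs_of_nonneg (hR0 N)]
    exact hRX N
  have hA : Summable (fun N : ℕ => (v (N + 1) : ℂ) * (t : ℂ) ^ (N + 1)) := hsummt _ habs_t
  have hB : Summable (fun N : ℕ => (v (N + 1) : ℂ) * ((q : ℂ) * t) ^ (N + 1)) :=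
    hsummt _ habs_qt
  have hCj : ∀ j, Summable (fun N : ℕ =>
      (v (N + 1) : ℂ) * ((Real.sqrt q : ℂ) * ω j * t) ^ (N + 1)) :=
    fun j => hsummt _ (habs_w j)
  have key : ∀ N : ℕ, ((NF (N + 1) : ℝ) : ℂ) * X (N + 1) =
      (v (N + 1) : ℂ) * (t : ℂ) ^ (N + 1) + (v (N + 1) : ℂ) * ((q : ℂ) * t) ^ (N + 1)
        - ∑ j, (v (N + 1) : ℂ) * ((Real.sqrt q : ℂ) * ω j * t) ^ (N + 1) := by
    intro N
    rw [hNF (N + 1) (by omega)]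
    simp only [hX]
    have hsum : ((Real.sqrt q : ℂ) ^ (N + 1) * ∑ j, ω j ^ (N + 1)) *
        ((v (N + 1) : ℂ) * (t : ℂ) ^ (N + 1)) =
        ∑ j, (v (N + 1) : ℂ) * ((Real.sqrt q : ℂ) * ω j * (t : ℂ)) ^ (N + 1) := by
      rw [Finset.mul_sum, Finset.sum_mul]
      refine Finset.sum_congr rfl fun j _ => ?_
      rw [mul_pow, mul_pow]
      ring
    rw [sub_mul, add_mul, one_mul, hsum, mul_pow]
    ring
  calc ∑' f : ℕ, ((f : ℂ) + 1) * ((Φ (f + 1) : ℕ) : ℂ) * ψ (f + 1) (t : ℂ)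
      = ∑' f : ℕ, ∑' n : ℕ, F (f, n) := tsum_congr hterm
    _ = ∑' p : ℕ × ℕ, F p := (Summable.tsum_prod hFsum).symm
    _ = ∑' s : Σ N : ℕ, {x : ℕ × ℕ // x ∈ Nat.divisorsAntidiagonal N}, F (divEquiv s) :=
        (divEquiv.tsum_eq F).symm
    _ = ∑' N : ℕ, ∑' x : {x : ℕ × ℕ // x ∈ Nat.divisorsAntidiagonal N}, F (divEquiv ⟨N, x⟩) :=
        Summable.tsum_sigma hsigC
    _ = ∑' N : ℕ, ((R N : ℝ) : ℂ) * X N := tsum_congr hfibC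
    _ = ((R 0 : ℝ) : ℂ) * X 0 + ∑' N : ℕ, ((R (N + 1) : ℝ) : ℂ) * X (N + 1) :=
        Summable.tsum_eq_zero_add hT
    _ = ∑' N : ℕ, ((NF (N + 1) : ℝ) : ℂ) * X (N + 1) := by
        have hR00 : R 0 = 0 := by simp [hR]
        rw [hR00]
        simp only [Complex.ofReal_zero, zero_mul, zero_add]
        refine tsum_congr fun N => ?_
        have : R (N + 1) = NF (N + 1) := by
          rw [hR, ← hΦ (N + 1) (by omega)]
          push_cast
          rfl
        rw [this]
    _ = ∑' N : ℕ, ((v (N + 1) : ℂ) * (t : ℂ) ^ (N + 1)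
          + (v (N + 1) : ℂ) * ((q : ℂ) * t) ^ (N + 1)
          - ∑ j, (v (N + 1) : ℂ) * ((Real.sqrt q : ℂ) * ω j * t) ^ (N + 1)) :=
        tsum_congr key
    _ = ψ 1 (t : ℂ) + ψ 1 ((q : ℂ) * t) - ∑ j, ψ 1 ((Real.sqrt q : ℂ) * ω j * t) := by
        rw [Summable.tsum_sub (hA.add hB) (summable_sum fun j _ => hCj j), Summable.tsum_add hA hB,
          Summable.tsum_finsetSum (fun j _ => hCj j)]
        rw [hψ1 (t : ℂ), hψ1 ((q : ℂ) * t)]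
        congr 1
        exact Finset.sum_congr rfl fun j _ => (hψ1 _).symm
end

section
/- For every integer N ≥ 1, one has |log h − g·log q − ∑_{f=1}^{N} N_f/(f·q^f) + ∑_{n=1}^{N} (1 + q^{−n})/n| ≤ 2g/((√q − 1)·(N+1)·q^{N/2}), where log denotes the natural logarithm. -/
open Finset

theorem log_class_number_formula (q g : ℕ) (hq : 2 ≤ q) (hg : 1 ≤ g)
    (ω : Fin (2 * g) → ℂ) (hω : ∀ j, ‖ω j‖ = 1)
    (hconj : Multiset.map (starRingEnd ℂ) (List.ofFn ω : Multiset ℂ) = (List.ofFn ω : Multiset ℂ))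
    (NF : ℕ → ℝ)
    (hNF : ∀ f : ℕ, 1 ≤ f →
      (NF f : ℂ) = (q : ℂ) ^ f + 1 - (Real.sqrt q : ℂ) ^ f * ∑ j, ω j ^ f)
    (h : ℝ)
    (hh : (h : ℂ) = (q : ℂ) ^ g * ∏ j, (1 - ω j * (Real.sqrt q : ℂ)⁻¹))
    (N : ℕ) (hN : 1 ≤ N) :
    |Real.log h - (g : ℝ) * Real.log q -
        ∑ f ∈ Finset.Icc 1 N, NF f / ((f : ℝ) * (q : ℝ) ^ f) +
        ∑ n ∈ Finset.Icc 1 N, (1 + ((q : ℝ) ^ n)⁻¹) / (n : ℝ)| ≤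
      2 * (g : ℝ) / ((Real.sqrt q - 1) * ((N : ℝ) + 1) * Real.sqrt q ^ N) := by
  set s : ℝ := Real.sqrt q with hs
  have hq1 : (1:ℝ) < q := by exact_mod_cast Nat.lt_of_lt_of_le Nat.one_lt_two hq
  have hs1 : 1 < s := by
    rw [hs, show (1:ℝ) = Real.sqrt 1 by simp]
    exact Real.sqrt_lt_sqrt zero_le_one hq1
  have hs0 : 0 < s := lt_trans one_pos hs1
  have hsq : s ^ 2 = q := Real.sq_sqrt (by positivity)
  set w : Fin (2*g) → ℂ := fun j => ω j * (s:ℂ)⁻¹ with hw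
  have hwnorm : ∀ j, ‖w j‖ = s⁻¹ := by
    intro j
    rw [hw]
    simp [norm_mul, hω, abs_of_pos hs0]
  have hinv1 : s⁻¹ < 1 := inv_lt_one_of_one_lt₀ hs1
  have hwlt : ∀ j, ‖w j‖ < 1 := fun j => by rw [hwnorm]; exact hinv1
  have hwne : ∀ j, (1 : ℂ) - w j ≠ 0 := by
    intro j hc
    have : w j = 1 := by linear_combination -hc
    have h1 := hwlt j
    rw [this] at h1
    simp at h1
  -- log h in terms of factors
  have habsne : ∀ j, ‖1 - w j‖ ≠ 0 := fun j => by
    simpa [sub_ne_zero] using hwne j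
  have hlogh : Real.log h = g * Real.log q + ∑ j, Real.log (‖1 - w j‖) := by
    have h1 : ‖(h:ℂ)‖ = (q:ℝ)^g * ∏ j, ‖1 - w j‖ := by
      rw [hh, norm_mul, norm_pow, norm_prod]
      simp
      exact Or.inl rfl
    rw [← Real.log_abs, ← Real.norm_eq_abs, ← Complex.norm_real, h1, Real.log_mul (by positivity)
      (Finset.prod_ne_zero_iff.2 fun j _ => habsne j), Real.log_pow,
      Real.log_prod (fun j _ => habsne j)]
  -- HasSum for each factor
  have hdivre : ∀ (z : ℂ) (n : ℕ), (z / (n:ℂ)).re = z.re / n := by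
    intro z n
    rw [show ((n:ℂ)) = ((n:ℝ):ℂ) by push_cast; ring, Complex.div_ofReal_re]
  set F : ℕ → ℝ := fun f => (∑ j, (w j)^f).re / f with hFdef
  have hF : HasSum F ((g:ℝ) * Real.log q - Real.log h) := by
    have hj : ∀ j, HasSum (fun f : ℕ => ((w j)^f / f).re)
        (-Real.log (‖1 - w j‖)) := by
      intro j
      have h2 := Complex.hasSum_re (Complex.hasSum_taylorSeries_neg_log (z := w j)
        (by exact hwlt j))
      simpa [Complex.log_re] using h2
    have h3 := hasSum_sum (s := Finset.univ) (f := fun j (f:ℕ) => ((w j)^f / f).re)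
      (fun j _ => hj j)
    have h4 : (fun f : ℕ => ∑ j, ((w j)^f / f).re) = F := by
      funext f
      rw [hFdef]
      simp only [← Complex.re_sum, ← Finset.sum_div]
      exact hdivre _ f
    rw [h4] at h3
    convert h3 using 1
    rw [hlogh]
    rw [Finset.sum_neg_distrib]
    ring
  -- NF identity
  have hNFre : ∀ f ∈ Finset.Icc 1 N,
      NF f / ((f : ℝ) * (q : ℝ) ^ f) = (1 + ((q:ℝ)^f)⁻¹)/f - F f := by
    intro f hf
    rw [Finset.mem_Icc] at hf
    have hf1 : 1 ≤ f := hf.1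
    have hfpos : (0:ℝ) < f := by exact_mod_cast hf1
    have hNFf : NF f = (q:ℝ)^f + 1 - s^f * (∑ j, ω j ^ f).re := by
      have h5 := congrArg Complex.re (hNF f hf1)
      simpa [Complex.sub_re, Complex.add_re, ← Complex.ofReal_pow,
        ← Complex.ofReal_natCast, ← Complex.ofReal_one, ← Complex.ofReal_add,
        Complex.ofReal_re, Complex.re_ofReal_mul] using h5
    have hFf : F f = (∑ j, ω j ^ f).re * (s^f)⁻¹ / f := by
      show (∑ j, (w j)^f).re / (f:ℝ) = _
      congr 1
      have : ∑ j, (w j)^f = (∑ j, ω j ^ f) * (((s^f)⁻¹ : ℝ) : ℂ) := by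
        rw [Finset.sum_mul]
        refine Finset.sum_congr rfl fun j _ => ?_
        rw [hw]
        push_cast
        rw [mul_pow, inv_pow]
      rw [this, mul_comm, Complex.re_ofReal_mul, mul_comm]
    have hqf : (q:ℝ)^f = s^f * s^f := by
      rw [← hsq, ← pow_mul, two_mul, pow_add]
    have hsf : s^f ≠ 0 := by positivity
    rw [hNFf, hFf, hqf]
    field_simp
  -- rewrite the expression as a tail sum
  have hFsummable : Summable F := hF.summable
  have hF0 : F 0 = 0 := by simp [hFdef]
  have hIcc : ∑ f ∈ Finset.Icc 1 N, F f = ∑ f ∈ Finset.range (N+1), F f := by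
    rw [show Finset.Icc 1 N = (Finset.range (N+1)).erase 0 by
      ext x; simp [Finset.mem_Icc, Finset.mem_erase, Finset.mem_range]; omega]
    exact (Finset.sum_erase _ hF0)
  have hkey : Real.log h - (g : ℝ) * Real.log q -
        ∑ f ∈ Finset.Icc 1 N, NF f / ((f : ℝ) * (q : ℝ) ^ f) +
        ∑ n ∈ Finset.Icc 1 N, (1 + ((q : ℝ) ^ n)⁻¹) / (n : ℝ)
      = -(∑' i : ℕ, F (i + (N+1))) := by
    have hsplit := Summable.sum_add_tsum_nat_add (N+1) hFsummable
    rw [hF.tsum_eq] at hsplit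
    have e1 : ∑ f ∈ Finset.Icc 1 N, NF f / ((f : ℝ) * (q : ℝ) ^ f)
        = ∑ f ∈ Finset.Icc 1 N, (1 + ((q:ℝ)^f)⁻¹)/f - ∑ f ∈ Finset.Icc 1 N, F f := by
      rw [Finset.sum_congr rfl hNFre, Finset.sum_sub_distrib]
    rw [e1, hIcc]
    linarith [hsplit]
  rw [hkey, abs_neg]
  -- bound the tail
  have hFb : ∀ f : ℕ, N + 1 ≤ f → |F f| ≤ 2*g/(N+1) * (s⁻¹)^f := by
    intro f hf
    have h6 : |(∑ j, (w j)^f).re| ≤ 2*g * (s⁻¹)^f := by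
      refine le_trans (Complex.abs_re_le_norm _) ?_
      refine le_trans (norm_sum_le _ _) (le_of_eq ?_)
      calc ∑ j, ‖(w j)^f‖ = ∑ j : Fin (2*g), (s⁻¹)^f := by
            refine Finset.sum_congr rfl fun j _ => ?_
            rw [norm_pow, hwnorm]
        _ = 2*g * (s⁻¹)^f := by
            rw [Finset.sum_const, Finset.card_univ, Fintype.card_fin]
            push_cast
            ring
    have hfpos : (0:ℝ) < f := by
      have : 0 < f := lt_of_lt_of_le (Nat.succ_pos N) hf
      exact_mod_cast this
    have hN1f : ((N:ℝ)+1) ≤ f := by exact_mod_cast hf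
    show |(∑ j, (w j)^f).re / (f:ℝ)| ≤ _
    rw [abs_div, abs_of_pos hfpos]
    calc |(∑ j, (w j)^f).re| / (f:ℝ) ≤ (2*g * (s⁻¹)^f) / ((N:ℝ)+1) :=
          div_le_div₀ (by positivity) h6 (by positivity) hN1f
      _ = 2*g/(N+1) * (s⁻¹)^f := by ring
  have hbsum : Summable (fun i : ℕ => 2*(g:ℝ)/(N+1) * (s⁻¹)^(i+(N+1))) := by
    simp_rw [pow_add]
    exact ((summable_geometric_of_lt_one (by positivity) hinv1).mul_right _).mul_left _
  have habsF : Summable (fun i : ℕ => |F (i+(N+1))|) :=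
    hbsum.of_nonneg_of_le (fun i => abs_nonneg _)
      (fun i => hFb _ (Nat.le_add_left _ _))
  calc |∑' i : ℕ, F (i + (N+1))| ≤ ∑' i : ℕ, |F (i+(N+1))| := by
        simpa [Real.norm_eq_abs] using
          norm_tsum_le_tsum_norm (f := fun i : ℕ => F (i+(N+1)))
            (by simpa [Real.norm_eq_abs] using habsF)
    _ ≤ ∑' i : ℕ, 2*(g:ℝ)/(N+1) * (s⁻¹)^(i+(N+1)) :=
        Summable.tsum_le_tsum (fun i => hFb _ (Nat.le_add_left _ _)) habsF hbsum
    _ = 2 * (g : ℝ) / ((s - 1) * ((N : ℝ) + 1) * s ^ N) := by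
        rw [tsum_mul_left]
        have : ∑' i : ℕ, (s⁻¹)^(i+(N+1)) = (s⁻¹)^(N+1) * (1 - s⁻¹)⁻¹ := by
          simp_rw [pow_add]
          rw [tsum_mul_right, tsum_geometric_of_lt_one (by positivity) hinv1]
          ring
        rw [this]
        have hsne : s ≠ 0 := ne_of_gt hs0
        have hs1ne : s - 1 ≠ 0 := ne_of_gt (by linarith)
        have hNne : ((N:ℝ)+1) ≠ 0 := by positivity
        have h1s : 1 - s⁻¹ = (s-1)/s := by field_simp
        rw [h1s, inv_pow]
        field_simp
        ring
end

section
/- For every integer N ≥ 1, one has h ≥ q^g · exp( ∑_{f=1}^{N} N_f/(f·q^f) − ∑_{n=1}^{N} (1 + q^{−n})/n − 2g/((√q − 1)·(N+1)·q^{N/2}) ). -/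
open Finset Complex

lemma taylor_bound {z : ℂ} (hz : ‖z‖ < 1) (N : ℕ) :
    ‖Complex.log (1 - z) + ∑ f ∈ Finset.Icc 1 N, z ^ f / f‖ ≤
      ‖z‖ ^ (N + 1) * (1 - ‖z‖)⁻¹ / (N + 1) := by
  have hz' : ‖-z‖ < 1 := by simpa using hz
  have h1 := Complex.norm_log_sub_logTaylor_le N hz'
  have h2 : Complex.logTaylor (N + 1) (-z) = -∑ f ∈ Finset.Icc 1 N, z ^ f / f := by
    rw [Complex.logTaylor]
    have hins : Finset.range (N + 1) = insert 0 (Finset.Icc 1 N) := by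
      ext x; simp; omega
    rw [hins, Finset.sum_insert (by simp), ← Finset.sum_neg_distrib]
    simp only [Nat.cast_zero, div_zero, zero_add, pow_zero]
    refine Finset.sum_congr rfl fun j hj => ?_
    rw [neg_pow z]
    have : ((-1 : ℂ)) ^ (j + 1) * ((-1) ^ j * z ^ j) = -(z ^ j) := by
      rw [← mul_assoc, ← pow_add]
      have hodd : Odd (j + 1 + j) := ⟨j, by ring⟩
      rw [hodd.neg_one_pow]; ring
    rw [this, neg_div]
  rw [h2, sub_neg_eq_add] at h1
  have h3 : (1 : ℂ) + -z = 1 - z := by ring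
  rw [h3] at h1
  simpa using h1

lemma prod_comp_conj {n : ℕ} (ω : Fin n → ℂ)
    (hconj : Multiset.map (starRingEnd ℂ) (List.ofFn ω : Multiset ℂ) = (List.ofFn ω : Multiset ℂ))
    (φ : ℂ → ℂ) : ∏ j, φ (starRingEnd ℂ (ω j)) = ∏ j, φ (ω j) := by
  have e1 : ∀ ψ : ℂ → ℂ, ((List.ofFn ω : Multiset ℂ).map ψ).prod = ∏ j, ψ (ω j) := by
    intro ψ
    simp [Multiset.map_coe, Multiset.prod_coe, List.map_ofFn, List.prod_ofFn, Function.comp]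
  calc ∏ j, φ (starRingEnd ℂ (ω j))
      = ((List.ofFn ω : Multiset ℂ).map (fun w => φ (starRingEnd ℂ w))).prod :=
        (e1 (fun w => φ (starRingEnd ℂ w))).symm
    _ = (((List.ofFn ω : Multiset ℂ).map (starRingEnd ℂ)).map φ).prod := by
        rw [Multiset.map_map]; rfl
    _ = ((List.ofFn ω : Multiset ℂ).map φ).prod := by rw [hconj]
    _ = ∏ j, φ (ω j) := e1 _

theorem class_number_lower_bound (q g : ℕ) (hq : 2 ≤ q) (hg : 1 ≤ g)
    (ω : Fin (2 * g) → ℂ) (hω : ∀ j, ‖ω j‖ = 1)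
    (hconj : Multiset.map (starRingEnd ℂ) (List.ofFn ω : Multiset ℂ) = (List.ofFn ω : Multiset ℂ))
    (NF : ℕ → ℝ)
    (hNF : ∀ f : ℕ, 1 ≤ f →
      (NF f : ℂ) = (q : ℂ) ^ f + 1 - (Real.sqrt q : ℂ) ^ f * ∑ j, ω j ^ f)
    (h : ℝ)
    (hh : (h : ℂ) = (q : ℂ) ^ g * ∏ j, (1 - ω j * (Real.sqrt q : ℂ)⁻¹))
    (N : ℕ) (hN : 1 ≤ N) :
    (q : ℝ) ^ g * Real.exp (∑ f ∈ Finset.Icc 1 N, NF f / ((f : ℝ) * (q : ℝ) ^ f) -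
        ∑ n ∈ Finset.Icc 1 N, (1 + ((q : ℝ) ^ n)⁻¹) / (n : ℝ) -
        2 * (g : ℝ) / ((Real.sqrt q - 1) * ((N : ℝ) + 1) * Real.sqrt q ^ N)) ≤ h := by
  have hq1 : (1 : ℝ) < (q : ℝ) := by exact_mod_cast lt_of_lt_of_le one_lt_two hq
  have hq0 : (0 : ℝ) < (q : ℝ) := lt_trans one_pos hq1
  set r : ℝ := Real.sqrt q with hr
  have hr1 : 1 < r := by
    rw [hr, show (1 : ℝ) = Real.sqrt 1 from Real.sqrt_one.symm]
    exact Real.sqrt_lt_sqrt zero_le_one hq1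
  have hr0 : 0 < r := lt_trans one_pos hr1
  have hrinv : r⁻¹ < 1 := inv_lt_one_of_one_lt₀ hr1
  have hrinv0 : 0 < r⁻¹ := inv_pos.mpr hr0
  have hrr : r * r = (q : ℝ) := Real.mul_self_sqrt (le_of_lt hq0)
  set z : Fin (2 * g) → ℂ := fun j => ω j * (r : ℂ)⁻¹ with hzdef
  have habsz : ∀ j, ‖z j‖ = r⁻¹ := by
    intro j
    simp [hzdef, norm_mul, hω, norm_inv, Complex.norm_real, abs_of_pos hr0]
  have habsz1 : ∀ j, ‖z j‖ < 1 := fun j => by rw [habsz]; exact hrinv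
  have hzne : ∀ j, (1 : ℂ) - z j ≠ 0 := by
    intro j h0
    have h1 : (1 : ℂ) = z j := sub_eq_zero.mp h0
    have h2 : ‖z j‖ = 1 := by rw [← h1]; simp
    rw [habsz j] at h2
    linarith
  -- positivity of h via IVT
  set F : ℝ → ℂ := fun t => ∏ j, (1 - ω j * (t : ℂ)) with hFdef
  have hFim : ∀ t : ℝ, (F t).im = 0 := by
    intro t
    have h1 : (starRingEnd ℂ) (F t) = F t := by
      rw [hFdef]
      simp only [map_prod, map_sub, map_one, map_mul, Complex.conj_ofReal]
      simpa using prod_comp_conj ω hconj (fun w => 1 - w * (t : ℂ))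
    exact Complex.conj_eq_iff_im.mp h1
  have hFne : ∀ t ∈ Set.Icc (0 : ℝ) r⁻¹, F t ≠ 0 := by
    intro t ht h0
    rw [hFdef] at h0
    obtain ⟨j, -, hj⟩ := Finset.prod_eq_zero_iff.mp h0
    have h1 : ω j * (t : ℂ) = 1 := by
      have := sub_eq_zero.mp hj; exact this.symm
    have h2 : ‖ω j * (t : ℂ)‖ = 1 := by rw [h1]; simp
    rw [norm_mul, hω, Complex.norm_real, Real.norm_eq_abs, one_mul, _root_.abs_of_nonneg ht.1] at h2
    have := ht.2
    linarith
  have hFcont : Continuous fun t : ℝ => (F t).re := by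
    refine Complex.continuous_re.comp ?_
    rw [hFdef]
    exact continuous_finset_prod _ fun j _ =>
      continuous_const.sub (continuous_const.mul Complex.continuous_ofReal)
  have hFre0 : (F 0).re = 1 := by simp [hFdef]
  have hFrepos : 0 < (F r⁻¹).re := by
    by_contra hle
    push_neg at hle
    have hne' := hFne r⁻¹ ⟨le_of_lt hrinv0, le_refl _⟩
    have hlt : (F r⁻¹).re < 0 := by
      rcases lt_or_eq_of_le hle with h' | h'
      · exact h'
      · exact absurd (Complex.ext (by simpa using h') (by simpa using hFim r⁻¹)) hne'
    have hsub := intermediate_value_Icc' (le_of_lt hrinv0)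
      (hFcont.continuousOn : ContinuousOn (fun t : ℝ => (F t).re) (Set.Icc 0 r⁻¹))
    have h0mem : (0 : ℝ) ∈ Set.Icc ((F r⁻¹).re) ((F 0).re) := by
      constructor
      · exact le_of_lt hlt
      · rw [hFre0]; exact zero_le_one
    obtain ⟨t, ht, hFt⟩ := hsub h0mem
    exact hFne t ht (Complex.ext (by simpa using hFt) (by simpa using hFim t))
  have hhF : (h : ℂ) = (((q : ℝ) ^ g : ℝ) : ℂ) * F r⁻¹ := by
    rw [hh, hFdef]
    push_cast
    ring
  have hhre : h = (q : ℝ) ^ g * (F r⁻¹).re := by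
    have := congrArg Complex.re hhF
    rwa [Complex.ofReal_re, Complex.re_ofReal_mul] at this
  have hpos : 0 < h := by
    rw [hhre]; exact mul_pos (by positivity) hFrepos
  have hFabs : ‖F r⁻¹‖ = (F r⁻¹).re := by
    have heq : F r⁻¹ = (((F r⁻¹).re : ℝ) : ℂ) :=
      Complex.ext (by simp) (by simp [hFim r⁻¹])
    conv_lhs => rw [heq]
    rw [Complex.norm_real, Real.norm_eq_abs, abs_of_pos hFrepos]
  have hprod : h = (q : ℝ) ^ g * ∏ j, ‖1 - z j‖ := by
    rw [hhre, ← hFabs]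
    congr 1
    rw [hFdef, norm_prod]
    refine Finset.prod_congr rfl fun j _ => ?_
    rw [hzdef]
    push_cast
    ring_nf
  have hlogh : Real.log h = (g : ℝ) * Real.log q +
      ∑ j, Real.log (‖1 - z j‖) := by
    rw [hprod, Real.log_mul (by positivity) ?_, Real.log_pow, Real.log_prod]
    · intro j _
      exact norm_ne_zero_iff.mpr (hzne j)
    · refine ne_of_gt (Finset.prod_pos fun j _ => ?_)
      exact norm_pos_iff.mpr (hzne j)
  set L : ℂ := ∑ j, Complex.log (1 - z j) with hLdef
  set T : ℂ := ∑ j, ∑ f ∈ Finset.Icc 1 N, z j ^ f / (f : ℂ) with hTdef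
  have hre : ∑ j, Real.log (‖1 - z j‖) = L.re := by
    rw [hLdef, Complex.re_sum]
    exact Finset.sum_congr rfl fun j _ => (Complex.log_re _).symm
  -- tail bound
  have hB : ‖L + T‖ ≤
      2 * (g : ℝ) * ((r⁻¹) ^ (N + 1) * (1 - r⁻¹)⁻¹ / ((N : ℝ) + 1)) := by
    have hLT : L + T = ∑ j, (Complex.log (1 - z j) + ∑ f ∈ Finset.Icc 1 N, z j ^ f / (f : ℂ)) := by
      rw [hLdef, hTdef, Finset.sum_add_distrib]
    rw [hLT]
    calc ‖∑ j, (Complex.log (1 - z j) + ∑ f ∈ Finset.Icc 1 N, z j ^ f / (f : ℂ))‖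
        ≤ ∑ j, ‖Complex.log (1 - z j) + ∑ f ∈ Finset.Icc 1 N, z j ^ f / (f : ℂ)‖ :=
          norm_sum_le _ _
      _ ≤ ∑ _j : Fin (2 * g), (r⁻¹) ^ (N + 1) * (1 - r⁻¹)⁻¹ / ((N : ℝ) + 1) := by
          refine Finset.sum_le_sum fun j _ => ?_
          have := taylor_bound (habsz1 j) N
          rwa [habsz j] at this
      _ = 2 * (g : ℝ) * ((r⁻¹) ^ (N + 1) * (1 - r⁻¹)⁻¹ / ((N : ℝ) + 1)) := by
          rw [Finset.sum_const, Finset.card_univ, Fintype.card_fin, nsmul_eq_mul]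
          push_cast
          ring
  have hLre : -(T.re) - 2 * (g : ℝ) * ((r⁻¹) ^ (N + 1) * (1 - r⁻¹)⁻¹ / ((N : ℝ) + 1)) ≤ L.re := by
    have h1 : |(L + T).re| ≤ ‖L + T‖ := Complex.abs_re_le_norm _
    have h2 : (L + T).re = L.re + T.re := Complex.add_re _ _
    have h3 := neg_abs_le ((L + T).re)
    linarith
  -- compute T.re
  have hkey : ∀ f ∈ Finset.Icc 1 N,
      (∑ j, z j ^ f) = ((((q : ℝ) ^ f + 1 - NF f) / (q : ℝ) ^ f : ℝ) : ℂ) := by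
    intro f hf
    have hf1 : 1 ≤ f := (Finset.mem_Icc.mp hf).1
    have hNFf := hNF f hf1
    have hrC : ((r : ℝ) : ℂ) ≠ 0 := by
      exact_mod_cast Complex.ofReal_ne_zero.mpr (ne_of_gt hr0)
    have hrfC : ((r : ℝ) : ℂ) ^ f ≠ 0 := pow_ne_zero f hrC
    have hsum : (∑ j, ω j ^ f) = ((q : ℂ) ^ f + 1 - (NF f : ℂ)) / ((r : ℂ)) ^ f := by
      rw [eq_div_iff hrfC]
      linear_combination hNFf
    have hrq : ((r : ℝ) : ℂ) * ((r : ℝ) : ℂ) = ((q : ℕ) : ℂ) := by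
      rw [← Complex.ofReal_mul, hrr]
      push_cast
      rfl
    calc (∑ j, z j ^ f) = (∑ j, ω j ^ f) * (((r : ℂ)) ^ f)⁻¹ := by
          rw [Finset.sum_mul]
          refine Finset.sum_congr rfl fun j _ => ?_
          simp [hzdef, mul_pow, inv_pow]
      _ = ((q : ℂ) ^ f + 1 - (NF f : ℂ)) / (((r : ℂ)) ^ f * ((r : ℂ)) ^ f) := by
          rw [hsum]; field_simp
      _ = ((q : ℂ) ^ f + 1 - (NF f : ℂ)) / ((q : ℂ)) ^ f := by
          rw [← mul_pow, hrq]
      _ = ((((q : ℝ) ^ f + 1 - NF f) / (q : ℝ) ^ f : ℝ) : ℂ) := by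
          push_cast
          ring
  have hTre : T.re = ∑ f ∈ Finset.Icc 1 N, ((q : ℝ) ^ f + 1 - NF f) / ((q : ℝ) ^ f * (f : ℝ)) := by
    have hTswap : T = ∑ f ∈ Finset.Icc 1 N, (∑ j, z j ^ f) / (f : ℂ) := by
      rw [hTdef, Finset.sum_comm]
      exact Finset.sum_congr rfl fun f _ => (Finset.sum_div _ _ _).symm
    rw [hTswap, Complex.re_sum]
    refine Finset.sum_congr rfl fun f hf => ?_
    rw [hkey f hf]
    rw [show ((f : ℕ) : ℂ) = (((f : ℝ)) : ℂ) by push_cast; rfl, ← Complex.ofReal_div,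
      Complex.ofReal_re, div_div]
  -- combine
  have hTre' : -(T.re) = ∑ f ∈ Finset.Icc 1 N, NF f / ((f : ℝ) * (q : ℝ) ^ f) -
      ∑ n ∈ Finset.Icc 1 N, (1 + ((q : ℝ) ^ n)⁻¹) / (n : ℝ) := by
    rw [hTre, ← Finset.sum_sub_distrib, ← Finset.sum_neg_distrib]
    refine Finset.sum_congr rfl fun f hf => ?_
    have hf1 : 1 ≤ f := (Finset.mem_Icc.mp hf).1
    have hfne : (f : ℝ) ≠ 0 := Nat.cast_ne_zero.mpr (by omega)
    have hqf : (q : ℝ) ^ f ≠ 0 := by positivity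
    field_simp
    ring
  have hBeq : 2 * (g : ℝ) * ((r⁻¹) ^ (N + 1) * (1 - r⁻¹)⁻¹ / ((N : ℝ) + 1)) =
      2 * (g : ℝ) / ((r - 1) * ((N : ℝ) + 1) * r ^ N) := by
    have hN1 : ((N : ℝ) + 1) ≠ 0 := by positivity
    have hrne : r ≠ 0 := ne_of_gt hr0
    have hr1ne : r - 1 ≠ 0 := sub_ne_zero.mpr (ne_of_gt hr1)
    have h1r : (1 - r⁻¹) = (r - 1) / r := by field_simp
    rw [inv_pow, h1r]
    field_simp
    ring
  have hSle : (∑ f ∈ Finset.Icc 1 N, NF f / ((f : ℝ) * (q : ℝ) ^ f) -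
      ∑ n ∈ Finset.Icc 1 N, (1 + ((q : ℝ) ^ n)⁻¹) / (n : ℝ) -
      2 * (g : ℝ) / ((r - 1) * ((N : ℝ) + 1) * r ^ N)) ≤ L.re := by
    rw [← hTre', ← hBeq]
    exact hLre
  have hexpq : Real.exp ((g : ℝ) * Real.log q) = (q : ℝ) ^ g := by
    rw [← Real.log_pow, Real.exp_log (by positivity)]
  calc (q : ℝ) ^ g * Real.exp (∑ f ∈ Finset.Icc 1 N, NF f / ((f : ℝ) * (q : ℝ) ^ f) -
        ∑ n ∈ Finset.Icc 1 N, (1 + ((q : ℝ) ^ n)⁻¹) / (n : ℝ) -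
        2 * (g : ℝ) / ((r - 1) * ((N : ℝ) + 1) * r ^ N))
      = Real.exp ((g : ℝ) * Real.log q + (∑ f ∈ Finset.Icc 1 N, NF f / ((f : ℝ) * (q : ℝ) ^ f) -
        ∑ n ∈ Finset.Icc 1 N, (1 + ((q : ℝ) ^ n)⁻¹) / (n : ℝ) -
        2 * (g : ℝ) / ((r - 1) * ((N : ℝ) + 1) * r ^ N))) := by
        rw [Real.exp_add, hexpq]
    _ ≤ Real.exp (Real.log h) := by
        apply Real.exp_le_exp.mpr
        rw [hlogh, hre]
        linarith
    _ = h := Real.exp_log hpos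
end

section
/- For every integer N ≥ 1, one has h ≤ q^g · exp( ∑_{f=1}^{N} N_f/(f·q^f) − ∑_{n=1}^{N} (1 + q^{−n})/n + 2g/((√q − 1)·(N+1)·q^{N/2}) ). -/
theorem class_number_upper_bound (q g : ℕ) (hq : 2 ≤ q) (hg : 1 ≤ g)
    (ω : Fin (2 * g) → ℂ) (hω : ∀ j, ‖ω j‖ = 1)
    (hconj : Multiset.map (starRingEnd ℂ) (List.ofFn ω : Multiset ℂ) = (List.ofFn ω : Multiset ℂ))
    (NF : ℕ → ℝ)
    (hNF : ∀ f : ℕ, 1 ≤ f →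
      (NF f : ℂ) = (q : ℂ) ^ f + 1 - (Real.sqrt q : ℂ) ^ f * ∑ j, ω j ^ f)
    (h : ℝ)
    (hh : (h : ℂ) = (q : ℂ) ^ g * ∏ j, (1 - ω j * (Real.sqrt q : ℂ)⁻¹))
    (N : ℕ) (hN : 1 ≤ N) :
    h ≤ (q : ℝ) ^ g * Real.exp (∑ f ∈ Finset.Icc 1 N, NF f / ((f : ℝ) * (q : ℝ) ^ f) -
        ∑ n ∈ Finset.Icc 1 N, (1 + ((q : ℝ) ^ n)⁻¹) / (n : ℝ) +
        2 * (g : ℝ) / ((Real.sqrt q - 1) * ((N : ℝ) + 1) * Real.sqrt q ^ N)) := by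
  have hq1 : (1:ℝ) < (q:ℝ) := by exact_mod_cast lt_of_lt_of_le one_lt_two hq
  have hq0 : (0:ℝ) < (q:ℝ) := lt_trans one_pos hq1
  set s : ℝ := Real.sqrt q with hsdef
  have hs1 : 1 < s := by
    rw [hsdef, show (1:ℝ) = Real.sqrt 1 by simp]
    exact Real.sqrt_lt_sqrt (by norm_num) hq1
  have hs0 : 0 < s := lt_trans one_pos hs1
  have hsq : s ^ 2 = (q:ℝ) := Real.sq_sqrt hq0.le
  set z : Fin (2 * g) → ℂ := fun j => ω j * ((s:ℝ) : ℂ)⁻¹ with hzdef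
  have hznorm : ∀ j, ‖z j‖ = s⁻¹ := by
    intro j
    rw [hzdef]
    simp only [norm_mul, norm_inv, hω j, Complex.norm_real, Real.norm_eq_abs,
      abs_of_pos hs0, one_mul]
  have hzlt : ∀ j, ‖z j‖ < 1 := by
    intro j; rw [hznorm]; exact inv_lt_one_of_one_lt₀ hs1
  have hne : ∀ j, (1 : ℂ) - z j ≠ 0 := by
    intro j hc
    have h2 : z j = 1 := (sub_eq_zero.mp hc).symm
    have h3 := hzlt j
    rw [h2, norm_one] at h3
    exact lt_irrefl _ h3
  -- sum of z powers
  have hsC : ((s:ℝ):ℂ) ≠ 0 := by exact_mod_cast hs0.ne'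
  have hqC : ((q:ℝ):ℂ) ≠ 0 := by exact_mod_cast hq0.ne'
  have hzsum : ∀ n : ℕ, 1 ≤ n →
      ∑ j, z j ^ n = (((q:ℝ)^n + 1 - NF n) / (q:ℝ)^n : ℝ) := by
    intro n hn
    have h1 := hNF n hn
    have hs2 : ((s:ℝ):ℂ)^2 = ((q:ℝ):ℂ) := by
      rw [← Complex.ofReal_pow, hsq]
    have key : ∑ j, z j ^ n = (∑ j, ω j ^ n) * (((s:ℝ):ℂ)^n)⁻¹ := by
      rw [hzdef]
      simp [mul_pow, ← Finset.sum_mul, inv_pow]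
    have hss : ((s:ℝ):ℂ)^n * ((s:ℝ):ℂ)^n = ((q:ℝ):ℂ)^n := by
      rw [← pow_add, ← two_mul, pow_mul, hs2]
    rw [key]
    have hqn0 : ((q:ℕ):ℂ)^n ≠ 0 := pow_ne_zero _ (by exact_mod_cast hq0.ne')
    have hsn0 : ((s:ℝ):ℂ)^n ≠ 0 := pow_ne_zero _ (by exact_mod_cast hs0.ne')
    push_cast at h1 hss ⊢
    rw [eq_div_iff hqn0]
    have hkey2 : ((s:ℝ):ℂ)^n * ∑ j, ω j ^ n = ((q:ℕ):ℂ)^n + 1 - ((NF n : ℝ):ℂ) := by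
      linear_combination h1
    rw [← hkey2, ← hss]
    field_simp
  -- the A function
  set A : ℕ → ℝ := fun n => (∑ j, z j ^ n / (n:ℂ)).re with hAdef
  have hA0 : A 0 = 0 := by simp [hAdef]
  have hAval : ∀ n : ℕ, 1 ≤ n →
      A n = (1 + ((q:ℝ)^n)⁻¹) / n - NF n / ((n:ℝ) * (q:ℝ)^n) := by
    intro n hn
    have hn0 : (n:ℝ) ≠ 0 := Nat.cast_ne_zero.mpr (by omega)
    have : ∑ j, z j ^ n / (n:ℂ) = ((((q:ℝ)^n + 1 - NF n) / ((q:ℝ)^n * n) : ℝ) : ℂ) := by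
      rw [← Finset.sum_div, hzsum n hn]
      push_cast
      rw [div_div]
    rw [hAdef]
    simp only [this, Complex.ofReal_re]
    field_simp
  -- HasSum
  set L : ℝ := ∑ j, (Complex.log (1 - z j)).re with hLdef
  have HS : HasSum A (-L) := by
    have h1 : HasSum (fun n : ℕ => ∑ j, z j ^ n / (n:ℂ))
        (∑ j, -(Complex.log (1 - z j))) :=
      hasSum_sum (fun j _ => Complex.hasSum_taylorSeries_neg_log (hzlt j))
    have h2 := Complex.hasSum_re h1
    convert h2 using 1
    rw [hLdef]
    simp [Complex.re_sum]
  have hsumm := HS.summable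
  have htsum : ∑' n, A n = -L := HS.tsum_eq
  have hsplit := hsumm.sum_add_tsum_nat_add (N + 1)
  set T : ℝ := ∑' i : ℕ, A (i + (N + 1)) with hTdef
  -- head sum
  have hhead : ∑ i ∈ Finset.range (N + 1), A i
      = ∑ f ∈ Finset.Icc 1 N, ((1 + ((q:ℝ)^f)⁻¹) / f - NF f / ((f:ℝ) * (q:ℝ)^f)) := by
    rw [← Finset.sum_subset (s₁ := Finset.Icc 1 N) (s₂ := Finset.range (N + 1))
      (by intro x hx; simp at hx ⊢; omega)
      (by intro x hx hx'
          simp only [Finset.mem_range, Finset.mem_Icc, not_and, not_le] at hx hx'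
          have hx0 : x = 0 := by omega
          rw [hx0]; exact hA0)]
    exact Finset.sum_congr rfl (fun f hf => hAval f (Finset.mem_Icc.mp hf).1)
  -- tail bound
  set R : ℝ := 2 * (g:ℝ) / ((s - 1) * ((N:ℝ) + 1) * s ^ N) with hRdef
  have hsum_geo : Summable (fun i : ℕ =>
      (2 * (g:ℝ) / ((N:ℝ) + 1) * (s⁻¹)^(N+1)) * (s⁻¹)^i) :=
    (summable_geometric_of_lt_one (by positivity) (inv_lt_one_of_one_lt₀ hs1)).mul_left _
  have hbound : ∀ i : ℕ, |A (i + (N + 1))|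
      ≤ (2 * (g:ℝ) / ((N:ℝ) + 1) * (s⁻¹)^(N+1)) * (s⁻¹)^i := by
    intro i
    set m := i + (N + 1) with hm
    have hm1 : 1 ≤ m := by omega
    have hmN : (N:ℝ) + 1 ≤ (m:ℝ) := by exact_mod_cast Nat.le_of_lt_succ (by omega)
    calc |A m| ≤ ‖∑ j, z j ^ m / (m:ℂ)‖ := Complex.abs_re_le_norm _
      _ ≤ ∑ j, ‖z j ^ m / (m:ℂ)‖ := by
          exact norm_sum_le _ _
      _ = ∑ j : Fin (2*g), (s⁻¹)^m / m := by
          refine Finset.sum_congr rfl (fun j _ => ?_)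
          rw [norm_div, norm_pow]
          simp [hznorm j]
      _ = 2 * (g:ℝ) * ((s⁻¹)^m / m) := by
          rw [Finset.sum_const, Finset.card_univ, Fintype.card_fin, nsmul_eq_mul]
          push_cast
          ring
      _ ≤ 2 * (g:ℝ) * ((s⁻¹)^m / ((N:ℝ)+1)) := by
          have hg0 : (0:ℝ) ≤ 2 * (g:ℝ) := by positivity
          apply mul_le_mul_of_nonneg_left _ hg0
          apply div_le_div_of_nonneg_left (by positivity) (by positivity) hmN
      _ = (2 * (g:ℝ) / ((N:ℝ) + 1) * (s⁻¹)^(N+1)) * (s⁻¹)^i := by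
          rw [hm, pow_add]
          ring
  have hsummA : Summable (fun i : ℕ => |A (i + (N + 1))|) :=
    Summable.of_nonneg_of_le (fun i => abs_nonneg _) hbound hsum_geo
  have hT : |T| ≤ R := by
    calc |T| ≤ ∑' i : ℕ, |A (i + (N + 1))| := by
          rw [hTdef]
          have := norm_tsum_le_tsum_norm (f := fun i : ℕ => A (i + (N + 1)))
            (by simpa [Real.norm_eq_abs] using hsummA)
          simpa [Real.norm_eq_abs] using this
      _ ≤ ∑' i : ℕ, (2 * (g:ℝ) / ((N:ℝ) + 1) * (s⁻¹)^(N+1)) * (s⁻¹)^i :=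
          Summable.tsum_le_tsum hbound hsummA hsum_geo
      _ = (2 * (g:ℝ) / ((N:ℝ) + 1) * (s⁻¹)^(N+1)) * (1 - s⁻¹)⁻¹ := by
          rw [tsum_mul_left, tsum_geometric_of_lt_one (by positivity) (inv_lt_one_of_one_lt₀ hs1)]
      _ = R := by
          rw [hRdef]
          have hN0 : ((N:ℝ) + 1) ≠ 0 := by positivity
          have hs1' : s - 1 ≠ 0 := by linarith
          have hs0' : s ≠ 0 := hs0.ne'
          field_simp
          rw [mul_right_comm, ← pow_succ', ← mul_pow, mul_one_div_cancel hs0', one_pow]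
  -- L bound
  have hLle : L ≤ ∑ f ∈ Finset.Icc 1 N, NF f / ((f:ℝ) * (q:ℝ)^f) -
      ∑ n ∈ Finset.Icc 1 N, (1 + ((q:ℝ)^n)⁻¹) / (n:ℝ) + R := by
    have hLeq : L = -(∑ i ∈ Finset.range (N + 1), A i) - T := by
      rw [hTdef] at hsplit ⊢
      linarith [hsplit, htsum]
    rw [hLeq, hhead, Finset.sum_sub_distrib]
    have : -T ≤ R := by cases abs_le.mp hT; linarith
    linarith
  -- final
  have habs : h ≤ |h| := le_abs_self h
  have hprod : |h| = (q:ℝ)^g * Real.exp L := by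
    have h1 : |h| = ‖(h:ℂ)‖ := by rw [Complex.norm_real, Real.norm_eq_abs]
    rw [h1, hh, norm_mul, norm_pow]
    congr 1
    · simp
    · rw [norm_prod, hLdef, Real.exp_sum]
      refine Finset.prod_congr rfl (fun j _ => ?_)
      rw [Complex.log_re, Real.exp_log (norm_pos_iff.mpr (hne j))]
  calc h ≤ |h| := habs
    _ = (q:ℝ)^g * Real.exp L := hprod
    _ ≤ _ := by
        apply mul_le_mul_of_nonneg_left _ (by positivity)
        exact Real.exp_le_exp.mpr hLle
end

section
/- For every integer N ≥ 1, one has ∑_{f=1}^{N} Φ_f·log(q^f/(q^f − 1)) − ∑_{n=1}^{N} N_n/(n·q^n) ≤ c₁(q)/(N·q^{N/2}) + c₂(q)·g/(N·q^{3N/4}), where c₁(q) = 2q(q+1)/(q−1)², c₂(q) = (2q/(q−1))·(√q/(√q − 1) + q^{3/2}/(q^{3/2} − 1)), and log denotes the natural logarithm. -/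
open Finset


private lemma geom_Icc_le {x : ℝ} (hx : 1 < x) (K : ℕ) :
    ∑ f ∈ Icc 1 K, x ^ f ≤ x ^ (K+1) / (x - 1) := by
  have h0 : (0:ℝ) < x - 1 := by linarith
  have h1 : ∑ f ∈ Icc 1 K, x ^ f ≤ ∑ f ∈ range (K+1), x ^ f := by
    apply sum_le_sum_of_subset_of_nonneg
    · intro i hi; simp only [mem_Icc] at hi; simp only [mem_range]; omega
    · intro i _ _; positivity
  rw [geom_sum_eq (by linarith : x ≠ 1)] at h1
  refine h1.trans ?_
  gcongr
  linarith

private lemma geom_tail_le {x : ℝ} (hx : 1 < x) (K N : ℕ) :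
    ∑ f ∈ Icc (K+1) N, (x⁻¹) ^ f ≤ (x⁻¹) ^ K / (x - 1) := by
  have hx0 : (0:ℝ) < x := by linarith
  have hxne : x ≠ 0 := ne_of_gt hx0
  have hd : (0:ℝ) < x - 1 := by linarith
  have hxi1 : x⁻¹ < 1 := by rw [inv_lt_one_iff₀]; right; exact hx
  have hxi0 : (0:ℝ) < x⁻¹ := by positivity
  rw [← Finset.Ico_add_one_right_eq_Icc, sum_Ico_eq_sum_range]
  simp_rw [pow_add]
  rw [← mul_sum]
  have hgs : ∑ k ∈ range (N + 1 - (K+1)), (x⁻¹) ^ k ≤ (1 - x⁻¹)⁻¹ := by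
    have hsummable := summable_geometric_of_lt_one hxi0.le hxi1
    have := Summable.sum_le_tsum (range (N + 1 - (K+1))) (fun i _ => by positivity) hsummable
    rwa [tsum_geometric_of_lt_one hxi0.le hxi1] at this
  refine le_trans (mul_le_mul_of_nonneg_left hgs (by positivity)) ?_
  have hinv : (1 - x⁻¹)⁻¹ = x / (x - 1) := by
    rw [show (1 - x⁻¹) = (x-1)/x by field_simp, inv_div]
  rw [hinv, pow_one]
  rw [div_eq_mul_inv ((x:ℝ)⁻¹^K)]
  field_simp
  exact le_refl _


private lemma log_tail_le {y : ℝ} (hy : 1 < y) (M : ℕ) :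
    Real.log (y / (y - 1)) ≤ (∑ m ∈ Icc 1 M, (y⁻¹) ^ m / m) +
      (y⁻¹) ^ (M+1) / (M+1) * (1 - y⁻¹)⁻¹ := by
  have hy0 : (0:ℝ) < y := by linarith
  have hyne : y ≠ 0 := ne_of_gt hy0
  have hd : (0:ℝ) < y - 1 := by linarith
  set x : ℝ := y⁻¹ with hxdef
  have hx0 : (0:ℝ) < x := by positivity
  have hx1 : x < 1 := by rw [hxdef, inv_lt_one_iff₀]; right; exact hy
  have habs : |x| < 1 := by rw [abs_of_pos hx0]; exact hx1
  have hs := Real.hasSum_pow_div_log_of_abs_lt_one habs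
  have hlog : Real.log (y / (y - 1)) = -Real.log (1 - x) := by
    rw [← Real.log_inv]
    congr 1
    rw [hxdef, show (1 - y⁻¹) = (y-1)/y by field_simp, inv_div]
  have key := Summable.sum_add_tsum_nat_add (f := fun n : ℕ => x ^ (n+1) / (n+1)) M hs.summable
  rw [hs.tsum_eq] at key
  have hfin : ∑ m ∈ Icc 1 M, x ^ m / (m:ℝ) = ∑ i ∈ range M, x ^ (i+1) / ((i:ℝ)+1) := by
    rw [← Finset.Ico_add_one_right_eq_Icc, sum_Ico_eq_sum_range]
    have hM : M + 1 - 1 = M := by omega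
    rw [hM]
    apply sum_congr rfl
    intro i _
    have : 1 + i = i + 1 := by omega
    rw [this]
    push_cast
    ring
  have htail : ∑' i : ℕ, x ^ (i + M + 1) / ((i:ℝ) + M + 1) ≤ x ^ (M+1) / (M+1) * (1 - x)⁻¹ := by
    have h1 : ∀ i : ℕ, x ^ (i + M + 1) / ((i:ℝ) + M + 1) ≤ x ^ (M+1) / (M+1) * x ^ i := by
      intro i
      have e : x ^ (i + M + 1) = x ^ (M+1) * x ^ i := by
        rw [← pow_add]; congr 1; omega
      have hle : ((M:ℝ)+1) ≤ ((i:ℝ)+M+1) := by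
        have : (0:ℝ) ≤ (i:ℝ) := Nat.cast_nonneg i
        linarith
      calc x ^ (i + M + 1) / ((i:ℝ) + M + 1)
          ≤ x ^ (i + M + 1) / ((M:ℝ) + 1) := by
            gcongr
        _ = x ^ (M+1) / (M+1) * x ^ i := by rw [e]; ring
    have hsum1 : Summable (fun i : ℕ => x ^ (i + M + 1) / ((i:ℝ) + M + 1)) := by
      have := (summable_nat_add_iff (f := fun n : ℕ => x ^ (n+1) / ((n:ℝ)+1)) M).2 hs.summable
      refine this.congr ?_
      intro i
      push_cast
      ring_nf
    have hsum2 : Summable (fun i : ℕ => x ^ (M+1) / (M+1) * x ^ i) :=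
      (summable_geometric_of_lt_one hx0.le hx1).mul_left _
    calc ∑' i : ℕ, x ^ (i + M + 1) / ((i:ℝ) + M + 1)
        ≤ ∑' i : ℕ, x ^ (M+1) / (M+1) * x ^ i := Summable.tsum_le_tsum h1 hsum1 hsum2
      _ = x ^ (M+1) / (M+1) * (1 - x)⁻¹ := by
          rw [Summable.tsum_mul_left _ (summable_geometric_of_lt_one hx0.le hx1),
            tsum_geometric_of_lt_one hx0.le hx1]
  have hshift : ∑' i : ℕ, x ^ (i + M + 1) / ((i:ℝ) + M + 1)
      = ∑' i : ℕ, x ^ ((i + M) + 1) / (((i + M : ℕ) : ℝ) + 1) := by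
    apply tsum_congr; intro i; push_cast; ring_nf
  rw [hlog, ← key, hfin]
  rw [hshift] at htail
  linarith [htail]

private lemma divisor_reindex (N : ℕ) (F : ℕ → ℕ → ℝ) :
    ∑ n ∈ Icc 1 N, ∑ d ∈ n.divisors, F d n
      = ∑ f ∈ Icc 1 N, ∑ m ∈ Icc 1 (N / f), F f (f * m) := by
  rw [sum_sigma', sum_sigma']
  apply Finset.sum_nbij' (i := fun p => (⟨p.2, p.1 / p.2⟩ : (_ : ℕ) × ℕ))
    (j := fun p => (⟨p.1 * p.2, p.1⟩ : (_ : ℕ) × ℕ))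
  · rintro ⟨n, d⟩ hp
    simp only [mem_sigma, mem_Icc, Nat.mem_divisors] at hp ⊢
    obtain ⟨⟨hn1, hnN⟩, hdvd, hne⟩ := hp
    have hd0 : 0 < d := Nat.pos_of_dvd_of_pos hdvd (by omega)
    refine ⟨⟨hd0, le_trans (Nat.le_of_dvd (by omega) hdvd) hnN⟩, ?_, Nat.div_le_div_right hnN⟩
    exact Nat.one_le_div_iff hd0 |>.2 (Nat.le_of_dvd (by omega) hdvd)
  · rintro ⟨f, m⟩ hp
    simp only [mem_sigma, mem_Icc, Nat.mem_divisors] at hp ⊢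
    obtain ⟨⟨hf1, hfN⟩, hm1, hmN⟩ := hp
    have hfm : f * m ≤ N := by
      have := (Nat.le_div_iff_mul_le (by omega : 0 < f)).1 hmN
      calc f * m = m * f := Nat.mul_comm f m
        _ ≤ N := this
    exact ⟨⟨Nat.one_le_iff_ne_zero.2 (by positivity), hfm⟩, Dvd.intro m rfl, by positivity⟩
  · rintro ⟨n, d⟩ hp
    simp only [mem_sigma, mem_Icc, Nat.mem_divisors] at hp
    obtain ⟨⟨hn1, hnN⟩, hdvd, hne⟩ := hp
    simp only [Sigma.mk.inj_iff]
    exact ⟨Nat.mul_div_cancel' hdvd, heq_of_eq rfl⟩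
  · rintro ⟨f, m⟩ hp
    simp only [mem_sigma, mem_Icc] at hp
    simp only [Sigma.mk.inj_iff]
    exact ⟨trivial, heq_of_eq (Nat.mul_div_cancel_left m (by omega))⟩
  · rintro ⟨n, d⟩ hp
    simp only [mem_sigma, mem_Icc, Nat.mem_divisors] at hp
    obtain ⟨⟨hn1, hnN⟩, hdvd, hne⟩ := hp
    simp only []
    rw [Nat.mul_div_cancel' hdvd]


set_option maxHeartbeats 2000000 in
theorem eps0_lower_bound (q g : ℕ) (hq : 2 ≤ q) (hg : 1 ≤ g)
    (ω : Fin (2 * g) → ℂ) (hω : ∀ j, ‖ω j‖ = 1)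
    (hconj : Multiset.map (starRingEnd ℂ) (List.ofFn ω : Multiset ℂ) = (List.ofFn ω : Multiset ℂ))
    (NF : ℕ → ℝ)
    (hNF : ∀ f : ℕ, 1 ≤ f →
      (NF f : ℂ) = (q : ℂ) ^ f + 1 - (Real.sqrt q : ℂ) ^ f * ∑ j, ω j ^ f)
    (Φ : ℕ → ℕ)
    (hΦ : ∀ n : ℕ, 1 ≤ n → (∑ d ∈ n.divisors, (d * Φ d : ℝ)) = NF n)
    (N : ℕ) (hN : 1 ≤ N) :
    ∑ f ∈ Finset.Icc 1 N, (Φ f : ℝ) * Real.log ((q : ℝ) ^ f / ((q : ℝ) ^ f - 1)) -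
        ∑ n ∈ Finset.Icc 1 N, NF n / ((n : ℝ) * (q : ℝ) ^ n) ≤
      (2 * q * (q + 1) / ((q : ℝ) - 1) ^ 2) / ((N : ℝ) * Real.sqrt q ^ N) +
        (2 * q / ((q : ℝ) - 1) *
            (Real.sqrt q / (Real.sqrt q - 1) +
              (q : ℝ) ^ ((3 : ℝ) / 2) / ((q : ℝ) ^ ((3 : ℝ) / 2) - 1))) * (g : ℝ) /
          ((N : ℝ) * ((q : ℝ) ^ ((3 : ℝ) / 4)) ^ N) := by
  set r : ℝ := (q : ℝ) with hrdef
  have hr2 : (2:ℝ) ≤ r := by rw [hrdef]; exact_mod_cast hq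
  have hr1 : (1:ℝ) < r := by linarith
  have hr0 : (0:ℝ) < r := by linarith
  have hrne : r ≠ 0 := ne_of_gt hr0
  have hrd : (0:ℝ) < r - 1 := by linarith
  obtain ⟨u, hu0, hu1, hu4, hu2, hu6, hu3⟩ :
      ∃ u : ℝ, 0 < u ∧ 1 < u ∧ u ^ (4:ℕ) = r ∧ u ^ (2:ℕ) = Real.sqrt r ∧
        u ^ (6:ℕ) = r ^ ((3:ℝ)/2) ∧ u ^ (3:ℕ) = r ^ ((3:ℝ)/4) := by
    refine ⟨r ^ ((1:ℝ)/4), Real.rpow_pos_of_pos hr0 _,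
      (Real.one_lt_rpow_iff hr0.le).2 (Or.inl ⟨hr1, by norm_num⟩), ?_, ?_, ?_, ?_⟩
    · rw [← Real.rpow_natCast (r ^ ((1:ℝ)/4)) 4, ← Real.rpow_mul hr0.le]
      norm_num
    · rw [← Real.rpow_natCast (r ^ ((1:ℝ)/4)) 2, ← Real.rpow_mul hr0.le,
        Real.sqrt_eq_rpow]
      norm_num
    · rw [← Real.rpow_natCast (r ^ ((1:ℝ)/4)) 6, ← Real.rpow_mul hr0.le]
      norm_num
    · rw [← Real.rpow_natCast (r ^ ((1:ℝ)/4)) 3, ← Real.rpow_mul hr0.le]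
      norm_num
  have hune : u ≠ 0 := ne_of_gt hu0
  have hu21 : (1:ℝ) < u ^ (2:ℕ) := one_lt_pow₀ hu1 (by norm_num)
  have hu41 : (1:ℝ) < u ^ (4:ℕ) := one_lt_pow₀ hu1 (by norm_num)
  have hu61 : (1:ℝ) < u ^ (6:ℕ) := one_lt_pow₀ hu1 (by norm_num)
  have hu2d : (0:ℝ) < u ^ (2:ℕ) - 1 := by linarith
  have hu6d : (0:ℝ) < u ^ (6:ℕ) - 1 := by linarith
  have hN0 : (0:ℝ) < (N:ℝ) := by exact_mod_cast hN
  -- upper bound for NF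
  have hNFub : ∀ f : ℕ, 1 ≤ f → NF f ≤ r ^ f + 1 + 2 * g * (u ^ (2:ℕ)) ^ f := by
    intro f hf
    have h := hNF f hf
    have h' : ((NF f : ℝ) : ℂ) = (((r ^ f + 1 : ℝ)) : ℂ)
        - (((Real.sqrt r) ^ f : ℝ) : ℂ) * ∑ j, ω j ^ f := by
      rw [h, hrdef]
      push_cast
      ring
    have hre : NF f = r ^ f + 1 - (Real.sqrt r) ^ f * (∑ j, ω j ^ f).re := by
      have h2 := congrArg Complex.re h'
      rwa [Complex.ofReal_re, Complex.sub_re, Complex.ofReal_re,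
        Complex.re_ofReal_mul] at h2
    have habs : |(∑ j, ω j ^ f).re| ≤ (2*g : ℝ) := by
      calc |(∑ j, ω j ^ f).re| ≤ ‖∑ j, ω j ^ f‖ := Complex.abs_re_le_norm _
        _ ≤ ∑ j, ‖ω j ^ f‖ := norm_sum_le _ _
        _ = 2*g := by
            simp only [norm_pow, hω, one_pow]
            simp
    have hsf : (0:ℝ) ≤ (Real.sqrt r) ^ f := by positivity
    have hb : -((Real.sqrt r) ^ f * (∑ j, ω j ^ f).re) ≤ (Real.sqrt r) ^ f * (2*g) := by
      rw [← mul_neg]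
      apply mul_le_mul_of_nonneg_left _ hsf
      have := abs_le.1 habs
      linarith [this.1]
    have heq : (Real.sqrt r) ^ f = (u ^ (2:ℕ)) ^ f := by rw [hu2]
    rw [heq] at hb hre
    rw [hre]
    have he2 : (u ^ (2:ℕ)) ^ f * (2*(g:ℝ)) = 2 * g * (u ^ (2:ℕ)) ^ f := by ring
    rw [he2] at hb
    linarith
  -- f * Φ f ≤ NF f
  have hfΦ : ∀ f : ℕ, 1 ≤ f → (f:ℝ) * (Φ f : ℝ) ≤ NF f := by
    intro f hf
    rw [← hΦ f hf]
    have hmem : f ∈ f.divisors := Nat.mem_divisors_self f (by omega)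
    exact single_le_sum (f := fun d : ℕ => ((d:ℝ) * (Φ d : ℝ)))
      (fun d _ => by positivity) hmem
  -- rewrite B
  have hB : ∑ n ∈ Icc 1 N, NF n / ((n:ℝ) * r ^ n)
      = ∑ f ∈ Icc 1 N, (Φ f : ℝ) * ∑ m ∈ Icc 1 (N / f), ((r ^ f)⁻¹) ^ m / m := by
    have h1 : ∀ n ∈ Icc 1 N, NF n / ((n:ℝ) * r ^ n)
        = ∑ d ∈ n.divisors, ((d:ℝ) * (Φ d : ℝ)) / ((n:ℝ) * r ^ n) := by
      intro n hn
      rw [← sum_div, hΦ n (mem_Icc.1 hn).1]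
    rw [sum_congr rfl h1,
      divisor_reindex N (fun d n => ((d:ℝ) * (Φ d : ℝ)) / ((n:ℝ) * r ^ n))]
    apply sum_congr rfl
    intro f hf
    rw [mul_sum]
    apply sum_congr rfl
    intro m hm
    simp only [mem_Icc] at hf hm
    have hf0 : (0:ℝ) < (f:ℝ) := by exact_mod_cast hf.1
    have hm0 : (0:ℝ) < (m:ℝ) := by exact_mod_cast hm.1
    have hrp : (0:ℝ) < r ^ (f*m) := by positivity
    rw [inv_pow, ← pow_mul]
    push_cast
    field_simp
  set cc : ℝ := r / ((r - 1) * ((N:ℝ) + 1)) with hccdef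
  have hcc0 : (0:ℝ) ≤ cc := by positivity
  -- per-f log bound
  have hlogb : ∀ f ∈ Icc 1 N,
      Real.log (r ^ f / (r ^ f - 1)) - (∑ m ∈ Icc 1 (N / f), ((r ^ f)⁻¹) ^ m / m)
        ≤ (f:ℝ) * ((r ^ (f * (N / f + 1)))⁻¹) * cc := by
    intro f hf
    simp only [mem_Icc] at hf
    have hf1 : 1 ≤ f := hf.1
    have hfN : f ≤ N := hf.2
    have hy1 : (1:ℝ) < r ^ f := one_lt_pow₀ hr1 (by omega)
    have hy0 : (0:ℝ) < r ^ f := by positivity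
    have hyd : (0:ℝ) < r ^ f - 1 := by linarith
    have hlt := log_tail_le hy1 (N / f)
    set M := N / f with hMdef
    have hnat : N + 1 ≤ f * (M + 1) := by
      have h5 : N < (M + 1) * f :=
        (Nat.div_lt_iff_lt_mul (by omega : 0 < f)).1 (by omega : N / f < M + 1)
      rw [Nat.mul_comm]
      omega
    have hXeq : ((r ^ f)⁻¹) ^ (M+1) = (r ^ (f * (M + 1)))⁻¹ := by
      rw [inv_pow, ← pow_mul]
    have hfrac : ((M:ℝ) + 1)⁻¹ ≤ (f:ℝ) / ((N:ℝ) + 1) := by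
      rw [inv_eq_one_div, div_le_div_iff₀ (by positivity) (by positivity)]
      have : ((N:ℝ) + 1) ≤ (f:ℝ) * ((M:ℝ) + 1) := by exact_mod_cast hnat
      linarith
    have hyr : r ≤ r ^ f := le_self_pow₀ hr1.le (by omega)
    have hgeo : (1 - (r ^ f)⁻¹)⁻¹ ≤ r / (r - 1) := by
      have he : (1 - (r ^ f)⁻¹) = (r ^ f - 1) / r ^ f := by field_simp
      rw [he, inv_div, div_le_div_iff₀ hyd hrd]
      nlinarith
    have hXpos : (0:ℝ) < (r ^ (f * (M + 1)))⁻¹ := by positivity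
    have htail : ((r ^ f)⁻¹) ^ (M+1) / ((M:ℝ)+1) * (1 - (r ^ f)⁻¹)⁻¹
        ≤ (f:ℝ) * ((r ^ (f * (M + 1)))⁻¹) * cc := by
      rw [hXeq]
      have s1 : (r ^ (f * (M + 1)))⁻¹ / ((M:ℝ)+1)
          ≤ (r ^ (f * (M + 1)))⁻¹ * ((f:ℝ) / ((N:ℝ) + 1)) := by
        rw [div_eq_mul_inv]
        exact mul_le_mul_of_nonneg_left hfrac (by positivity)
      have hgeo0 : (0:ℝ) ≤ (1 - (r ^ f)⁻¹)⁻¹ := by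
        have h1x : (0:ℝ) < 1 - (r ^ f)⁻¹ := by
          rw [sub_pos, inv_lt_one_iff₀]
          right
          exact hy1
        exact le_of_lt (inv_pos.2 h1x)
      calc (r ^ (f * (M + 1)))⁻¹ / ((M:ℝ)+1) * (1 - (r ^ f)⁻¹)⁻¹
          ≤ (r ^ (f * (M + 1)))⁻¹ * ((f:ℝ) / ((N:ℝ) + 1)) * (r / (r - 1)) :=
            mul_le_mul s1 hgeo hgeo0 (by positivity)
        _ = (f:ℝ) * ((r ^ (f * (M + 1)))⁻¹) * cc := by
            rw [hccdef]; field_simp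
    calc Real.log (r ^ f / (r ^ f - 1)) - (∑ m ∈ Icc 1 M, ((r ^ f)⁻¹) ^ m / m)
        ≤ ((r ^ f)⁻¹) ^ (M+1) / ((M:ℝ)+1) * (1 - (r ^ f)⁻¹)⁻¹ := by linarith
      _ ≤ (f:ℝ) * ((r ^ (f * (M + 1)))⁻¹) * cc := htail
  have hu4d : (0:ℝ) < u ^ (4:ℕ) - 1 := by linarith
  -- N+1 <= f*(N/f+1)
  have hnatall : ∀ f : ℕ, 1 ≤ f → N + 1 ≤ f * (N / f + 1) := by
    intro f hf1
    have h5 : N < (N / f + 1) * f :=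
      (Nat.div_lt_iff_lt_mul (by omega : 0 < f)).1 (by omega : N / f < N / f + 1)
    rw [Nat.mul_comm]
    omega
  set G : ℕ → ℝ := fun f => (r ^ f + 1 + 2 * g * (u ^ (2:ℕ)) ^ f) * (r ^ (f * (N / f + 1)))⁻¹
    with hGdef
  have hstep1 : (∑ f ∈ Icc 1 N, (Φ f : ℝ) * Real.log (r ^ f / (r ^ f - 1)))
      - (∑ n ∈ Icc 1 N, NF n / ((n:ℝ) * r ^ n))
      ≤ (∑ f ∈ Icc 1 N, G f) * cc := by
    rw [hB, ← sum_sub_distrib, sum_mul]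
    apply sum_le_sum
    intro f hf
    obtain ⟨hf1, hfN⟩ := mem_Icc.1 hf
    have hΦ0 : (0:ℝ) ≤ (Φ f : ℝ) := Nat.cast_nonneg _
    have hlb := hlogb f hf
    have hXnn : (0:ℝ) ≤ (r ^ (f * (N / f + 1)))⁻¹ := by positivity
    calc (Φ f : ℝ) * Real.log (r ^ f / (r ^ f - 1))
          - (Φ f : ℝ) * ∑ m ∈ Icc 1 (N / f), ((r ^ f)⁻¹) ^ m / m
        = (Φ f : ℝ) * (Real.log (r ^ f / (r ^ f - 1))
            - ∑ m ∈ Icc 1 (N / f), ((r ^ f)⁻¹) ^ m / m) := by ring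
      _ ≤ (Φ f : ℝ) * ((f:ℝ) * ((r ^ (f * (N / f + 1)))⁻¹) * cc) :=
          mul_le_mul_of_nonneg_left hlb hΦ0
      _ = ((f:ℝ) * (Φ f : ℝ)) * (r ^ (f * (N / f + 1)))⁻¹ * cc := by ring
      _ ≤ NF f * (r ^ (f * (N / f + 1)))⁻¹ * cc :=
          mul_le_mul_of_nonneg_right
            (mul_le_mul_of_nonneg_right (hfΦ f hf1) hXnn) hcc0
      _ ≤ (r ^ f + 1 + 2 * g * (u ^ (2:ℕ)) ^ f) * (r ^ (f * (N / f + 1)))⁻¹ * cc :=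
          mul_le_mul_of_nonneg_right
            (mul_le_mul_of_nonneg_right (hNFub f hf1) hXnn) hcc0
      _ = G f * cc := by rw [hGdef]
  set K : ℕ := (N + 1) / 2 with hKdef
  have hK1 : 1 ≤ K := by omega
  have hKN : K ≤ N := by omega
  have hKle : 2 * K ≤ N + 1 := by omega
  have hKge : N ≤ 2 * K := by omega
  have hsplit : ∑ f ∈ Icc 1 N, G f
      = ∑ f ∈ Icc 1 K, G f + ∑ f ∈ Icc (K+1) N, G f := by
    rw [← Finset.Ico_add_one_right_eq_Icc 1 N, ← Finset.Ico_add_one_right_eq_Icc 1 K, ← Finset.Ico_add_one_right_eq_Icc (K+1) N]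
    exact (sum_Ico_consecutive G (by omega) (by omega)).symm
  -- pointwise A bound
  have hAbd : ∀ f : ℕ, 1 ≤ f →
      r ^ f + 1 + 2 * g * (u ^ (2:ℕ)) ^ f
        ≤ (1 + r⁻¹) * (u ^ (4:ℕ)) ^ f + 2 * g * (u ^ (2:ℕ)) ^ f := by
    intro f hf1
    rw [hu4]
    have h1 : r ≤ r ^ f := le_self_pow₀ hr1.le (by omega)
    have h3 : r⁻¹ * r ≤ r⁻¹ * r ^ f := mul_le_mul_of_nonneg_left h1 (by positivity)
    rw [inv_mul_cancel₀ hrne] at h3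
    have he : (1 + r⁻¹) * r ^ f = r ^ f + r⁻¹ * r ^ f := by ring
    linarith
  have hApos : ∀ f : ℕ, (0:ℝ) ≤ (1 + r⁻¹) * (u ^ (4:ℕ)) ^ f + 2 * g * (u ^ (2:ℕ)) ^ f := by
    intro f
    positivity
  have hS1 : ∑ f ∈ Icc 1 K, G f
      ≤ (1 + r⁻¹) * ((u ^ (4:ℕ)) ^ (K+1) / (u ^ (4:ℕ) - 1)) * (r ^ (N+1))⁻¹
        + 2 * g * ((u ^ (2:ℕ)) ^ (K+1) / (u ^ (2:ℕ) - 1)) * (r ^ (N+1))⁻¹ := by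
    calc ∑ f ∈ Icc 1 K, G f
        ≤ ∑ f ∈ Icc 1 K,
            ((1 + r⁻¹) * (u ^ (4:ℕ)) ^ f + 2 * g * (u ^ (2:ℕ)) ^ f) * (r ^ (N+1))⁻¹ := by
          apply sum_le_sum
          intro f hf
          obtain ⟨hf1, hfK⟩ := mem_Icc.1 hf
          have hX : (r ^ (f * (N / f + 1)))⁻¹ ≤ (r ^ (N+1))⁻¹ :=
            inv_anti₀ (by positivity) (pow_le_pow_right₀ hr1.le (hnatall f hf1))
          exact mul_le_mul (hAbd f hf1) hX (by positivity) (hApos f)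
      _ = (∑ f ∈ Icc 1 K, ((1 + r⁻¹) * (u ^ (4:ℕ)) ^ f + 2 * g * (u ^ (2:ℕ)) ^ f))
            * (r ^ (N+1))⁻¹ := by rw [sum_mul]
      _ ≤ ((1 + r⁻¹) * ((u ^ (4:ℕ)) ^ (K+1) / (u ^ (4:ℕ) - 1))
            + 2 * g * ((u ^ (2:ℕ)) ^ (K+1) / (u ^ (2:ℕ) - 1))) * (r ^ (N+1))⁻¹ := by
          apply mul_le_mul_of_nonneg_right _ (by positivity)
          rw [sum_add_distrib, ← mul_sum, ← mul_sum]
          exact add_le_add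
            (mul_le_mul_of_nonneg_left (geom_Icc_le hu41 K) (by positivity))
            (mul_le_mul_of_nonneg_left (geom_Icc_le hu21 K) (by positivity))
      _ = (1 + r⁻¹) * ((u ^ (4:ℕ)) ^ (K+1) / (u ^ (4:ℕ) - 1)) * (r ^ (N+1))⁻¹
            + 2 * g * ((u ^ (2:ℕ)) ^ (K+1) / (u ^ (2:ℕ) - 1)) * (r ^ (N+1))⁻¹ := by ring
  have hS2 : ∑ f ∈ Icc (K+1) N, G f
      ≤ (1 + r⁻¹) * (((u ^ (4:ℕ))⁻¹) ^ K / (u ^ (4:ℕ) - 1))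
        + 2 * g * (((u ^ (6:ℕ))⁻¹) ^ K / (u ^ (6:ℕ) - 1)) := by
    calc ∑ f ∈ Icc (K+1) N, G f
        ≤ ∑ f ∈ Icc (K+1) N,
            ((1 + r⁻¹) * ((u ^ (4:ℕ))⁻¹) ^ f + 2 * g * ((u ^ (6:ℕ))⁻¹) ^ f) := by
          apply sum_le_sum
          intro f hf
          obtain ⟨hfK, hfN⟩ := mem_Icc.1 hf
          have hf1 : 1 ≤ f := by omega
          have h2f : f * 2 ≤ f * (N / f + 1) := by
            apply Nat.mul_le_mul_left
            have : 1 ≤ N / f := (Nat.one_le_div_iff (by omega)).2 hfN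
            omega
          have e8 : r ^ (f * 2) = (u ^ (8:ℕ)) ^ f := by
            rw [← hu4, ← pow_mul, ← pow_mul]
            congr 1
            ring
          have hX2 : (r ^ (f * (N / f + 1)))⁻¹ ≤ ((u ^ (8:ℕ)) ^ f)⁻¹ := by
            rw [← e8]
            exact inv_anti₀ (by positivity) (pow_le_pow_right₀ hr1.le h2f)
          have e4 : (u ^ (4:ℕ)) ^ f * ((u ^ (8:ℕ)) ^ f)⁻¹ = ((u ^ (4:ℕ))⁻¹) ^ f := by
            rw [← inv_pow, ← mul_pow]
            congr 1
            rw [show (u:ℝ) ^ (8:ℕ) = u ^ (4:ℕ) * u ^ (4:ℕ) by ring]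
            field_simp
          have e6 : (u ^ (2:ℕ)) ^ f * ((u ^ (8:ℕ)) ^ f)⁻¹ = ((u ^ (6:ℕ))⁻¹) ^ f := by
            rw [← inv_pow, ← mul_pow]
            congr 1
            rw [show (u:ℝ) ^ (8:ℕ) = u ^ (2:ℕ) * u ^ (6:ℕ) by ring]
            field_simp
          calc G f ≤ ((1 + r⁻¹) * (u ^ (4:ℕ)) ^ f + 2 * g * (u ^ (2:ℕ)) ^ f)
                * ((u ^ (8:ℕ)) ^ f)⁻¹ :=
              mul_le_mul (hAbd f hf1) hX2 (by positivity) (hApos f)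
            _ = (1 + r⁻¹) * ((u ^ (4:ℕ)) ^ f * ((u ^ (8:ℕ)) ^ f)⁻¹)
                + 2 * g * ((u ^ (2:ℕ)) ^ f * ((u ^ (8:ℕ)) ^ f)⁻¹) := by ring
            _ = (1 + r⁻¹) * ((u ^ (4:ℕ))⁻¹) ^ f + 2 * g * ((u ^ (6:ℕ))⁻¹) ^ f := by
                rw [e4, e6]
      _ = (1 + r⁻¹) * (∑ f ∈ Icc (K+1) N, ((u ^ (4:ℕ))⁻¹) ^ f)
            + 2 * g * (∑ f ∈ Icc (K+1) N, ((u ^ (6:ℕ))⁻¹) ^ f) := by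
          rw [sum_add_distrib, ← mul_sum, ← mul_sum]
      _ ≤ (1 + r⁻¹) * (((u ^ (4:ℕ))⁻¹) ^ K / (u ^ (4:ℕ) - 1))
            + 2 * g * (((u ^ (6:ℕ))⁻¹) ^ K / (u ^ (6:ℕ) - 1)) :=
          add_le_add
            (mul_le_mul_of_nonneg_left (geom_tail_le hu41 K N) (by positivity))
            (mul_le_mul_of_nonneg_left (geom_tail_le hu61 K N) (by positivity))
  -- power comparisons
  have hcmp : ∀ a b c2 d : ℕ, a + d ≤ c2 + b → u^a * (u^b)⁻¹ ≤ u^c2 * (u^d)⁻¹ := by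
    intro a b c2 d h
    rw [← div_eq_mul_inv, ← div_eq_mul_inv,
      div_le_div_iff₀ (by positivity) (by positivity), ← pow_add, ← pow_add]
    exact pow_le_pow_right₀ hu1.le h
  have hinvmono : ∀ a b : ℕ, a ≤ b → (u^b)⁻¹ ≤ (u^a)⁻¹ := fun a b h =>
    inv_anti₀ (by positivity) (pow_le_pow_right₀ hu1.le h)
  have er : r ^ (N+1) = u ^ (4*(N+1)) := by rw [← hu4, ← pow_mul]
  have q1 : (u ^ (4:ℕ)) ^ (K+1) * (r ^ (N+1))⁻¹ ≤ u ^ (2:ℕ) * (u ^ (2*N))⁻¹ := by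
    rw [show (u ^ (4:ℕ)) ^ (K+1) = u ^ (4*(K+1)) from (pow_mul u 4 (K+1)).symm, er]
    exact hcmp _ _ _ _ (by omega)
  have q2 : ((u ^ (4:ℕ))⁻¹) ^ K ≤ (u ^ (2*N))⁻¹ := by
    rw [inv_pow, ← pow_mul]
    exact hinvmono _ _ (by omega)
  have q3 : (u ^ (2:ℕ)) ^ (K+1) * (r ^ (N+1))⁻¹ ≤ (u ^ (3*N))⁻¹ := by
    rw [show (u ^ (2:ℕ)) ^ (K+1) = u ^ (2*(K+1)) from (pow_mul u 2 (K+1)).symm, er]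
    have := hcmp (2*(K+1)) (4*(N+1)) 0 (3*N) (by omega)
    simpa using this
  have q4 : ((u ^ (6:ℕ))⁻¹) ^ K ≤ (u ^ (3*N))⁻¹ := by
    rw [inv_pow, ← pow_mul]
    exact hinvmono _ _ (by omega)
  have htotal : ∑ f ∈ Icc 1 N, G f ≤
      ((1 + r⁻¹) * (u ^ (2:ℕ) * (u ^ (2*N))⁻¹) / (u ^ (4:ℕ) - 1)
        + (1 + r⁻¹) * (u ^ (2*N))⁻¹ / (u ^ (4:ℕ) - 1))
      + (2 * g * (u ^ (3*N))⁻¹ / (u ^ (2:ℕ) - 1)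
        + 2 * g * (u ^ (3*N))⁻¹ / (u ^ (6:ℕ) - 1)) := by
    rw [hsplit]
    have b1 : ∑ f ∈ Icc 1 K, G f
        ≤ (1 + r⁻¹) * (u ^ (2:ℕ) * (u ^ (2*N))⁻¹) / (u ^ (4:ℕ) - 1)
          + 2 * g * (u ^ (3*N))⁻¹ / (u ^ (2:ℕ) - 1) := by
      refine hS1.trans ?_
      calc (1 + r⁻¹) * ((u ^ (4:ℕ)) ^ (K+1) / (u ^ (4:ℕ) - 1)) * (r ^ (N+1))⁻¹
            + 2 * g * ((u ^ (2:ℕ)) ^ (K+1) / (u ^ (2:ℕ) - 1)) * (r ^ (N+1))⁻¹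
          = (1 + r⁻¹) / (u ^ (4:ℕ) - 1) * ((u ^ (4:ℕ)) ^ (K+1) * (r ^ (N+1))⁻¹)
            + 2 * g / (u ^ (2:ℕ) - 1) * ((u ^ (2:ℕ)) ^ (K+1) * (r ^ (N+1))⁻¹) := by ring
        _ ≤ (1 + r⁻¹) / (u ^ (4:ℕ) - 1) * (u ^ (2:ℕ) * (u ^ (2*N))⁻¹)
            + 2 * g / (u ^ (2:ℕ) - 1) * (u ^ (3*N))⁻¹ :=
            add_le_add
              (mul_le_mul_of_nonneg_left q1 (by positivity))
              (mul_le_mul_of_nonneg_left q3 (by positivity))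
        _ = (1 + r⁻¹) * (u ^ (2:ℕ) * (u ^ (2*N))⁻¹) / (u ^ (4:ℕ) - 1)
            + 2 * g * (u ^ (3*N))⁻¹ / (u ^ (2:ℕ) - 1) := by ring
    have b2 : ∑ f ∈ Icc (K+1) N, G f
        ≤ (1 + r⁻¹) * (u ^ (2*N))⁻¹ / (u ^ (4:ℕ) - 1)
          + 2 * g * (u ^ (3*N))⁻¹ / (u ^ (6:ℕ) - 1) := by
      refine hS2.trans ?_
      calc (1 + r⁻¹) * (((u ^ (4:ℕ))⁻¹) ^ K / (u ^ (4:ℕ) - 1))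
            + 2 * g * (((u ^ (6:ℕ))⁻¹) ^ K / (u ^ (6:ℕ) - 1))
          = (1 + r⁻¹) / (u ^ (4:ℕ) - 1) * ((u ^ (4:ℕ))⁻¹) ^ K
            + 2 * g / (u ^ (6:ℕ) - 1) * ((u ^ (6:ℕ))⁻¹) ^ K := by ring
        _ ≤ (1 + r⁻¹) / (u ^ (4:ℕ) - 1) * (u ^ (2*N))⁻¹
            + 2 * g / (u ^ (6:ℕ) - 1) * (u ^ (3*N))⁻¹ :=
            add_le_add
              (mul_le_mul_of_nonneg_left q2 (by positivity))
              (mul_le_mul_of_nonneg_left q4 (by positivity))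
        _ = (1 + r⁻¹) * (u ^ (2*N))⁻¹ / (u ^ (4:ℕ) - 1)
            + 2 * g * (u ^ (3*N))⁻¹ / (u ^ (6:ℕ) - 1) := by ring
    calc ∑ f ∈ Icc 1 K, G f + ∑ f ∈ Icc (K+1) N, G f
        ≤ ((1 + r⁻¹) * (u ^ (2:ℕ) * (u ^ (2*N))⁻¹) / (u ^ (4:ℕ) - 1)
            + 2 * g * (u ^ (3*N))⁻¹ / (u ^ (2:ℕ) - 1))
          + ((1 + r⁻¹) * (u ^ (2*N))⁻¹ / (u ^ (4:ℕ) - 1)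
            + 2 * g * (u ^ (3*N))⁻¹ / (u ^ (6:ℕ) - 1)) := add_le_add b1 b2
      _ = _ := by ring
  -- final comparisons
  have hu4r : u ^ (4:ℕ) - 1 = r - 1 := by rw [hu4]
  have hu2r : u ^ (2:ℕ) ≤ r := by
    rw [← hu4]
    exact pow_le_pow_right₀ hu1.le (by norm_num)
  have hfin1 : ((1 + r⁻¹) * (u ^ (2:ℕ) * (u ^ (2*N))⁻¹) / (u ^ (4:ℕ) - 1)
        + (1 + r⁻¹) * (u ^ (2*N))⁻¹ / (u ^ (4:ℕ) - 1)) * cc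
      ≤ (2 * r * (r + 1) / (r - 1) ^ 2) / ((N:ℝ) * u ^ (2*N)) := by
    have e1 : ((1 + r⁻¹) * (u ^ (2:ℕ) * (u ^ (2*N))⁻¹) / (u ^ (4:ℕ) - 1)
          + (1 + r⁻¹) * (u ^ (2*N))⁻¹ / (u ^ (4:ℕ) - 1)) * cc
        = (r + 1) * (u ^ (2:ℕ) + 1) / ((r - 1) ^ 2 * (((N:ℝ) + 1) * u ^ (2*N))) := by
      rw [hu4r, hccdef]
      field_simp
    have e2 : (2 * r * (r + 1) / (r - 1) ^ 2) / ((N:ℝ) * u ^ (2*N))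
        = 2 * r * (r + 1) / ((r - 1) ^ 2 * ((N:ℝ) * u ^ (2*N))) := by rw [div_div]
    rw [e1, e2]
    apply div_le_div₀ (by positivity) ?_ ?_ ?_
    · nlinarith
    · exact mul_pos (pow_pos hrd 2) (mul_pos hN0 (by positivity))
    · have hup : (0:ℝ) < u ^ (2*N) := by positivity
      nlinarith [sq_nonneg (r - 1), mul_pos (pow_pos hrd 2) hup]
  have hfin2 : (2 * g * (u ^ (3*N))⁻¹ / (u ^ (2:ℕ) - 1)
        + 2 * g * (u ^ (3*N))⁻¹ / (u ^ (6:ℕ) - 1)) * cc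
      ≤ 2 * r / (r - 1) * (u ^ (2:ℕ) / (u ^ (2:ℕ) - 1) + u ^ (6:ℕ) / (u ^ (6:ℕ) - 1))
          * (g:ℝ) / ((N:ℝ) * u ^ (3*N)) := by
    have e1 : (2 * g * (u ^ (3*N))⁻¹ / (u ^ (2:ℕ) - 1)
          + 2 * g * (u ^ (3*N))⁻¹ / (u ^ (6:ℕ) - 1)) * cc
        = 2 * r * (g:ℝ) * ((u ^ (2:ℕ) - 1)⁻¹ + (u ^ (6:ℕ) - 1)⁻¹)
            / ((r - 1) * (((N:ℝ) + 1) * u ^ (3*N))) := by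
      rw [hccdef]
      field_simp
    have e2 : 2 * r / (r - 1) * (u ^ (2:ℕ) / (u ^ (2:ℕ) - 1) + u ^ (6:ℕ) / (u ^ (6:ℕ) - 1))
          * (g:ℝ) / ((N:ℝ) * u ^ (3*N))
        = 2 * r * (g:ℝ) * (u ^ (2:ℕ) / (u ^ (2:ℕ) - 1) + u ^ (6:ℕ) / (u ^ (6:ℕ) - 1))
            / ((r - 1) * ((N:ℝ) * u ^ (3*N))) := by
      field_simp
    rw [e1, e2]
    have hA : (u ^ (2:ℕ) - 1)⁻¹ + (u ^ (6:ℕ) - 1)⁻¹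
        ≤ u ^ (2:ℕ) / (u ^ (2:ℕ) - 1) + u ^ (6:ℕ) / (u ^ (6:ℕ) - 1) := by
      apply add_le_add
      · rw [inv_eq_one_div]
        exact div_le_div₀ (by positivity) (by nlinarith) hu2d le_rfl
      · rw [inv_eq_one_div]
        exact div_le_div₀ (by positivity) (by nlinarith) hu6d le_rfl
    have hB0 : (0:ℝ) ≤ u ^ (2:ℕ) / (u ^ (2:ℕ) - 1) + u ^ (6:ℕ) / (u ^ (6:ℕ) - 1) :=
      add_nonneg (div_nonneg (by positivity) hu2d.le) (div_nonneg (by positivity) hu6d.le)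
    apply div_le_div₀ (mul_nonneg (by positivity) hB0)
      (mul_le_mul_of_nonneg_left hA (by positivity))
      (mul_pos hrd (mul_pos hN0 (by positivity)))
    nlinarith [mul_pos hrd (pow_pos hu0 (3*N))]
  -- assemble
  rw [← hu2, ← hu6, ← pow_mul u 2 N]
  rw [show ((q:ℝ) ^ ((3:ℝ)/4)) = u ^ (3:ℕ) from hu3.symm, ← pow_mul u 3 N]
  calc (∑ f ∈ Icc 1 N, (Φ f : ℝ) * Real.log (r ^ f / (r ^ f - 1)))
      - (∑ n ∈ Icc 1 N, NF n / ((n:ℝ) * r ^ n))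
      ≤ (∑ f ∈ Icc 1 N, G f) * cc := hstep1
    _ ≤ (((1 + r⁻¹) * (u ^ (2:ℕ) * (u ^ (2*N))⁻¹) / (u ^ (4:ℕ) - 1)
          + (1 + r⁻¹) * (u ^ (2*N))⁻¹ / (u ^ (4:ℕ) - 1))
        + (2 * g * (u ^ (3*N))⁻¹ / (u ^ (2:ℕ) - 1)
          + 2 * g * (u ^ (3*N))⁻¹ / (u ^ (6:ℕ) - 1))) * cc :=
        mul_le_mul_of_nonneg_right htotal hcc0
    _ = ((1 + r⁻¹) * (u ^ (2:ℕ) * (u ^ (2*N))⁻¹) / (u ^ (4:ℕ) - 1)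
          + (1 + r⁻¹) * (u ^ (2*N))⁻¹ / (u ^ (4:ℕ) - 1)) * cc
        + (2 * g * (u ^ (3*N))⁻¹ / (u ^ (2:ℕ) - 1)
          + 2 * g * (u ^ (3*N))⁻¹ / (u ^ (6:ℕ) - 1)) * cc := by ring
    _ ≤ (2 * r * (r + 1) / (r - 1) ^ 2) / ((N:ℝ) * u ^ (2*N))
        + 2 * r / (r - 1) * (u ^ (2:ℕ) / (u ^ (2:ℕ) - 1) + u ^ (6:ℕ) / (u ^ (6:ℕ) - 1))
          * (g:ℝ) / ((N:ℝ) * u ^ (3*N)) := add_le_add hfin1 hfin2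
end

section
/- Suppose that for every index i ∈ ℕ we are given data as in the context, with the same q but genus g_i, normalized inverse roots ω^{(i)}_1, …, ω^{(i)}_{2g_i}, place counts Φ^{(i)}_1, Φ^{(i)}_2, …, and class number h_i, such that g_i → ∞ as i → ∞, and such that for every integer r ≥ 1 the limit φ_r = lim_{i→∞} Φ^{(i)}_r / g_i exists (an asymptotically exact family of curves). Then the series ∑_{r=1}^{∞} φ_r·log(q^r/(q^r − 1)) converges and lim_{i→∞} (log h_i)/g_i = log q + ∑_{r=1}^{∞} φ_r·log(q^r/(q^r − 1)), where log denotes the natural logarithm (the generalized Brauer–Siegel theorem for function fields). -/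
open Filter

lemma real_log_series {x : ℝ} (h0 : 0 ≤ x) (h1 : x < 1) :
    HasSum (fun m : ℕ => x ^ m / m) (-Real.log (1 - x)) := by
  have hz : ‖(x : ℂ)‖ < 1 := by
    simpa [Complex.norm_real, abs_of_nonneg h0] using h1
  have H := Complex.hasSum_re (Complex.hasSum_taylorSeries_neg_log hz)
  have e1 : ∀ m : ℕ, ((x : ℂ) ^ m / m).re = x ^ m / m := by
    intro m
    have : ((x : ℂ) ^ m / m) = ((x ^ m / m : ℝ) : ℂ) := by push_cast; ring
    rw [this, Complex.ofReal_re]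
  have e2 : (-(Complex.log (1 - (x : ℂ)))).re = -Real.log (1 - x) := by
    have : (1 - (x : ℂ)) = ((1 - x : ℝ) : ℂ) := by push_cast; ring
    rw [Complex.neg_re, this, Complex.log_ofReal_re]
  simpa [e1, e2] using H

lemma divisor_tsum_rearrange {G : ℕ × ℕ → ℝ} (hG : Summable G)
    (h0 : ∀ p : ℕ × ℕ, p.1 = 0 ∨ p.2 = 0 → G p = 0) :
    HasSum (fun n : ℕ => ∑ d ∈ n.divisors, G (d, n / d)) (∑' p, G p) := by
  have key := hG.hasSum.tsum_fiberwise (fun p => p.1 * p.2)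
  convert key using 2 with n
  · rfl
  rcases Nat.eq_zero_or_pos n with rfl | hn
  · have : ∀ p : (fun p : ℕ × ℕ => p.1 * p.2) ⁻¹' {0}, G p.val = 0 := by
      rintro ⟨⟨a, b⟩, hp⟩
      simp only [Set.mem_preimage, Set.mem_singleton_iff, Nat.mul_eq_zero] at hp
      exact h0 _ hp
    simp [this, tsum_zero]
  · rw [show (fun p : ℕ × ℕ => p.1 * p.2) ⁻¹' {n} = ↑n.divisorsAntidiagonal by
        ext p; simp [Nat.mem_divisorsAntidiagonal, hn.ne'],
      Finset.tsum_subtype' n.divisorsAntidiagonal G]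
    exact (Nat.sum_divisorsAntidiagonal (fun d m => G (d, m))).symm

lemma curve_key (q : ℕ) (hq : 2 ≤ q) (k : ℕ) (ω : Fin k → ℂ)
    (hω : ∀ j, ‖ω j‖ = 1) (G : ℕ) (h : ℝ)
    (hh : (h : ℂ) = (q : ℂ) ^ G * ∏ j, (1 - ω j * (Real.sqrt q : ℂ)⁻¹))
    (A : ℕ → ℝ)
    (hA : ∀ n : ℕ, 1 ≤ n →
      ((A n : ℂ)) = (q : ℂ) ^ n + 1 - (Real.sqrt q : ℂ) ^ n * ∑ j, ω j ^ n) :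
    HasSum (fun n : ℕ => (A n - (q : ℝ) ^ n - 1) / (n * (q : ℝ) ^ n))
      (Real.log h - G * Real.log q) ∧
    (∀ n : ℕ, |(A n - (q : ℝ) ^ n - 1) / (n * (q : ℝ) ^ n)| ≤
      k * ((Real.sqrt q)⁻¹) ^ n) ∧
    (∀ n : ℕ, 1 ≤ n → |A n - (q : ℝ) ^ n - 1| ≤ k * (Real.sqrt q) ^ n) := by
  set s : ℝ := Real.sqrt q with hs
  have hq0 : (0 : ℝ) ≤ q := by positivity
  have hq1 : (1 : ℝ) < q := by exact_mod_cast lt_of_lt_of_le one_lt_two (by exact_mod_cast hq)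
  have hs2 : s ^ 2 = q := Real.sq_sqrt hq0
  have hs1 : 1 < s := by nlinarith [Real.sqrt_nonneg (q : ℝ)]
  have hs0 : (0 : ℝ) < s := lt_trans one_pos hs1
  have hsinv : s⁻¹ < 1 := inv_lt_one_of_one_lt₀ hs1
  have hq2 : ((s : ℂ)) * (s : ℂ) = (q : ℂ) := by
    have h' : s * s = (q : ℝ) := by nlinarith
    calc ((s : ℂ)) * (s : ℂ) = ((s * s : ℝ) : ℂ) := by push_cast; ring
    _ = (q : ℂ) := by rw [h']; push_cast; ring
  set z : Fin k → ℂ := fun j => ω j * (s : ℂ)⁻¹ with hz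
  have hzn : ∀ j, ‖z j‖ < 1 := by
    intro j
    have : ‖z j‖ = s⁻¹ := by
      simp [hz, norm_mul, hω j, norm_inv, Complex.norm_real, Real.norm_eq_abs,
        abs_of_pos hs0]
    rw [this]; exact hsinv
  have hz1 : ∀ j, (1 : ℂ) - z j ≠ 0 := by
    intro j hc
    have hj := hzn j
    rw [← sub_eq_zero.mp hc] at hj
    simp at hj
  have H1 : HasSum (fun n : ℕ => ∑ j, z j ^ n / n)
      (∑ j, -Complex.log (1 - z j)) :=
    hasSum_sum (fun j _ => Complex.hasSum_taylorSeries_neg_log (hzn j))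
  have H2 := Complex.hasSum_re H1
  have hterm : ∀ n : ℕ, (∑ j, z j ^ n / n).re
      = -((A n - (q : ℝ) ^ n - 1) / (n * (q : ℝ) ^ n)) := by
    intro n
    rcases Nat.eq_zero_or_pos n with rfl | hn
    · simp
    · have hsn : ((s : ℂ)) ^ n ≠ 0 := pow_ne_zero _ (by
        simpa [Complex.ofReal_ne_zero] using hs0.ne')
      have hnn : (n : ℂ) ≠ 0 := Nat.cast_ne_zero.2 hn.ne'
      have hq2n : ((s : ℂ)) ^ n * ((s : ℂ)) ^ n = (q : ℂ) ^ n := by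
        rw [← mul_pow, hq2]
      have hAn := hA n hn
      have e1 : (∑ j, z j ^ n / n) =
          ((((q : ℝ) ^ n + 1 - A n) / (n * (q : ℝ) ^ n) : ℝ) : ℂ) := by
        have hzsum : (∑ j, z j ^ n) = (∑ j, ω j ^ n) * ((s : ℂ) ^ n)⁻¹ := by
          simp [hz, mul_pow, ← Finset.sum_mul, inv_pow]
        rw [← Finset.sum_div, hzsum]
        push_cast
        rw [← hq2n] at hAn ⊢
        rw [hAn]
        field_simp
        ring
      rw [e1, Complex.ofReal_re]
      ring
  have hNUM : ∀ n : ℕ, 1 ≤ n → |A n - (q : ℝ) ^ n - 1| ≤ k * s ^ n := by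
    intro n hn
    have hAn := hA n hn
    have hcast : ((A n - (q : ℝ) ^ n - 1 : ℝ) : ℂ)
        = -((s : ℂ) ^ n * ∑ j, ω j ^ n) := by
      push_cast
      linear_combination hAn
    have habs2 := congrArg (‖·‖) hcast
    rw [Complex.norm_real, Real.norm_eq_abs, norm_neg, norm_mul, norm_pow, Complex.norm_real,
      Real.norm_eq_abs, abs_of_pos hs0] at habs2
    have hb : ‖∑ j, ω j ^ n‖ ≤ k := by
      calc ‖∑ j, ω j ^ n‖ = ‖∑ j, ω j ^ n‖ := rfl
      _ ≤ ∑ j, ‖ω j ^ n‖ := norm_sum_le _ _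
      _ = ∑ j : Fin k, (1 : ℝ) := by
          refine Finset.sum_congr rfl fun j _ => ?_
          rw [norm_pow, hω j, one_pow]
      _ = k := by simp
    rw [habs2]
    calc s ^ n * ‖∑ j, ω j ^ n‖ ≤ s ^ n * k :=
      mul_le_mul_of_nonneg_left hb (by positivity)
    _ = k * s ^ n := by ring
  refine ⟨?_, ?_, hNUM⟩
  · have H3 : HasSum (fun n : ℕ => -((A n - (q : ℝ) ^ n - 1) / (n * (q : ℝ) ^ n)))
        ((∑ j, -Complex.log (1 - z j)).re) := by
      convert H2 using 2 with n
      exact (hterm _).symm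
    have H4 := H3.neg
    simp only [neg_neg] at H4
    convert H4 using 1
    · rfl
    have hre : (∑ j, -Complex.log (1 - z j)).re
        = -(∑ j, Real.log ‖1 - z j‖) := by
      rw [Complex.re_sum]
      simp [Complex.neg_re, Complex.log_re]
    rw [hre]
    have habs : |h| = (q : ℝ) ^ G * ∏ j, ‖1 - z j‖ := by
      have := congrArg (‖·‖) hh
      simpa [norm_mul, norm_pow, norm_prod, Complex.norm_real, Complex.norm_natCast] using this
    have hne : ∀ j : Fin k, ‖1 - z j‖ ≠ 0 :=
      fun j => norm_ne_zero_iff.mpr (hz1 j)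
    have hlog : Real.log h = G * Real.log q + ∑ j, Real.log ‖1 - z j‖ := by
      rw [← Real.log_abs, habs, Real.log_mul (by positivity)
        (Finset.prod_ne_zero_iff.2 fun j _ => hne j),
        Real.log_pow, Real.log_prod (fun j _ => hne j)]
    rw [hlog]
    ring
  · intro n
    rcases Nat.eq_zero_or_pos n with rfl | hn
    · simp
    · have hnum := hNUM n hn
      have hden : (0 : ℝ) < n * (q : ℝ) ^ n := by positivity
      rw [abs_div, abs_of_pos hden, div_le_iff₀ hden]
      have hqs : (q : ℝ) ^ n = s ^ n * s ^ n := by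
        rw [← pow_add, ← hs2]; ring
      have h1n : (1 : ℝ) ≤ n := by exact_mod_cast hn
      have hinv : s⁻¹ ^ n * s ^ n = 1 := by
        rw [← mul_pow, inv_mul_cancel₀ hs0.ne', one_pow]
      have heq : (k : ℝ) * s⁻¹ ^ n * (n * (q : ℝ) ^ n) = (k : ℝ) * n * s ^ n := by
        rw [hqs]
        calc (k : ℝ) * s⁻¹ ^ n * (↑n * (s ^ n * s ^ n))
            = (k : ℝ) * ↑n * s ^ n * (s⁻¹ ^ n * s ^ n) := by ring
        _ = (k : ℝ) * ↑n * s ^ n := by rw [hinv, mul_one]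
      have hfin : 0 ≤ (k : ℝ) * s ^ n * (n - 1) :=
        mul_nonneg (mul_nonneg (Nat.cast_nonneg k) (pow_pos hs0 n).le) (by linarith)
      calc |A n - (q : ℝ) ^ n - 1| ≤ k * s ^ n := hnum
      _ ≤ (k : ℝ) * n * s ^ n := by nlinarith
      _ = (k : ℝ) * s⁻¹ ^ n * (n * (q : ℝ) ^ n) := heq.symm

set_option maxHeartbeats 1000000 in
theorem generalized_brauer_siegel (q : ℕ) (hq : 2 ≤ q)
    (g : ℕ → ℕ) (hg : ∀ i, 1 ≤ g i)
    (ω : (i : ℕ) → Fin (2 * g i) → ℂ)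
    (hω : ∀ i j, ‖ω i j‖ = 1)
    (hconj : ∀ i, Multiset.map (starRingEnd ℂ) (List.ofFn (ω i) : Multiset ℂ) =
      (List.ofFn (ω i) : Multiset ℂ))
    (Φ : ℕ → ℕ → ℕ)
    (hΦ : ∀ i, ∀ n : ℕ, 1 ≤ n →
      (∑ d ∈ n.divisors, (d * Φ i d : ℂ)) =
        (q : ℂ) ^ n + 1 - (Real.sqrt q : ℂ) ^ n * ∑ j, ω i j ^ n)
    (h : ℕ → ℝ)
    (hh : ∀ i, (h i : ℂ) = (q : ℂ) ^ (g i) * ∏ j, (1 - ω i j * (Real.sqrt q : ℂ)⁻¹))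
    (hgtop : Tendsto (fun i => (g i : ℝ)) atTop atTop)
    (φ : ℕ → ℝ)
    (hφ : ∀ r : ℕ, 1 ≤ r →
      Tendsto (fun i => (Φ i r : ℝ) / (g i : ℝ)) atTop (nhds (φ r))) :
    Summable (fun r : ℕ =>
      φ (r + 1) * Real.log ((q : ℝ) ^ (r + 1) / ((q : ℝ) ^ (r + 1) - 1))) ∧
    Tendsto (fun i => Real.log (h i) / (g i : ℝ)) atTop
      (nhds (Real.log q +
        ∑' r : ℕ, φ (r + 1) * Real.log ((q : ℝ) ^ (r + 1) / ((q : ℝ) ^ (r + 1) - 1)))) := by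
  have hq0 : (0 : ℝ) ≤ q := by positivity
  have hq1 : (1 : ℝ) < q := by exact_mod_cast lt_of_lt_of_le one_lt_two (by exact_mod_cast hq)
  set s : ℝ := Real.sqrt q with hs
  have hs2 : s ^ 2 = q := Real.sq_sqrt hq0
  have hs1 : 1 < s := by nlinarith [Real.sqrt_nonneg (q : ℝ)]
  have hs0 : (0 : ℝ) < s := lt_trans one_pos hs1
  have hsinv : s⁻¹ < 1 := by
    rw [inv_lt_one_iff₀]; right; exact hs1
  have hsinv0 : (0 : ℝ) ≤ s⁻¹ := by positivity
  have gpos : ∀ i, (0 : ℝ) < g i := fun i => by exact_mod_cast hg i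
  -- the divisor sums
  set A : ℕ → ℕ → ℝ := fun i n => ∑ d ∈ n.divisors, (d : ℝ) * (Φ i d : ℝ) with hA
  have hAcast : ∀ i n, 1 ≤ n → ((A i n : ℝ) : ℂ) =
      (q : ℂ) ^ n + 1 - (Real.sqrt q : ℂ) ^ n * ∑ j, ω i j ^ n := by
    intro i n hn
    rw [← hΦ i n hn]
    push_cast [hA]
    norm_num
  have key := fun i => curve_key q hq (2 * g i) (ω i) (hω i) (g i) (h i) (hh i)
    (A i) (hAcast i)
  set u : ℕ → ℕ → ℝ :=
    fun i n => (A i n - (q : ℝ) ^ n - 1) / (n * (q : ℝ) ^ n) with hu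
  have key1 : ∀ i, HasSum (u i) (Real.log (h i) - g i * Real.log q) := fun i => (key i).1
  have key2 : ∀ i n, |u i n| ≤ (2 * g i : ℕ) * s⁻¹ ^ n := fun i => (key i).2.1
  have key3 : ∀ i n, 1 ≤ n → |A i n - (q : ℝ) ^ n - 1| ≤ (2 * g i : ℕ) * s ^ n :=
    fun i => (key i).2.2
  -- limits of the divisor sums
  set ν : ℕ → ℝ := fun n => ∑ d ∈ n.divisors, (d : ℝ) * φ d with hν
  have hAg : ∀ n, Tendsto (fun i => A i n / g i) atTop (nhds (ν n)) := by
    intro n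
    have heq2 : (fun i => A i n / (g i : ℝ))
        = fun i => ∑ d ∈ n.divisors, (d : ℝ) * ((Φ i d : ℝ) / g i) := by
      funext i
      rw [hA, Finset.sum_div]
      exact Finset.sum_congr rfl fun d _ => by ring
    rw [heq2]
    exact tendsto_finset_sum _ fun d hd =>
      ((hφ d (Nat.pos_of_mem_divisors hd)).const_mul _)
  have hB : ∀ n : ℕ, Tendsto (fun i => ((q : ℝ) ^ n + 1) / g i) atTop (nhds 0) := by
    intro n
    have h0 : Tendsto (fun i => ((g i : ℝ))⁻¹) atTop (nhds 0) :=
      tendsto_inv_atTop_zero.comp hgtop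
    have := h0.const_mul ((q : ℝ) ^ n + 1)
    rw [mul_zero] at this
    exact this.congr fun i => by rw [div_eq_mul_inv]
  -- the limit coefficients
  set c : ℕ → ℝ := fun n => ν n / (n * (q : ℝ) ^ n) with hc
  have htend : ∀ n, Tendsto (fun i => u i n / g i) atTop (nhds (c n)) := by
    intro n
    rcases Nat.eq_zero_or_pos n with rfl | hn
    · have h1 : (fun i => u i 0 / (g i : ℝ)) = fun _ => (0 : ℝ) := by
        funext i
        simp [hu]
      have h2 : c 0 = 0 := by simp [hc, hν]
      rw [h1, h2]
      exact tendsto_const_nhds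
    · have heq : (fun i => u i n / (g i : ℝ))
          = fun i => (A i n / g i - ((q : ℝ) ^ n + 1) / g i) / (n * (q : ℝ) ^ n) := by
        funext i
        rw [hu, div_div, div_sub_div_same, div_div]
        ring
      rw [heq]
      have := ((hAg n).sub (hB n)).div_const ((n : ℝ) * (q : ℝ) ^ n)
      rw [sub_zero] at this
      exact this
  have hbound : ∀ i n, |u i n / g i| ≤ 2 * s⁻¹ ^ n := by
    intro i n
    rw [abs_div, abs_of_pos (gpos i)]
    calc |u i n| / g i ≤ ((2 * g i : ℕ) * s⁻¹ ^ n) / g i := by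
          gcongr
          exact key2 i n
    _ = 2 * s⁻¹ ^ n := by
        push_cast
        field_simp [(gpos i).ne']
  have hboundsum : Summable (fun n : ℕ => 2 * s⁻¹ ^ n) :=
    (summable_geometric_of_lt_one hsinv0 hsinv).mul_left 2
  -- dominated convergence
  have Htsum : Tendsto (fun i => ∑' n, u i n / g i) atTop (nhds (∑' n, c n)) := by
    refine tendsto_tsum_of_dominated_convergence hboundsum htend ?_
    exact Eventually.of_forall fun i => fun n => by
      rw [Real.norm_eq_abs]; exact hbound i n
  -- identify the functions
  have hfun : ∀ i, Real.log (h i) / g i = Real.log q + ∑' n, u i n / g i := by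
    intro i
    rw [tsum_div_const, (key1 i).tsum_eq]
    field_simp [(gpos i).ne']
    ring
  have HtendFinal : Tendsto (fun i => Real.log (h i) / (g i : ℝ)) atTop
      (nhds (Real.log q + ∑' n, c n)) := by
    have := Htsum.const_add (Real.log q)
    exact this.congr fun i => (hfun i).symm
  -- nonnegativity and bounds on φ and ν
  have φnonneg : ∀ d : ℕ, 1 ≤ d → 0 ≤ φ d := by
    intro d hd
    exact ge_of_tendsto (hφ d hd) (Eventually.of_forall fun i => by positivity)
  have νnonneg : ∀ n, 0 ≤ ν n := by
    intro n
    refine Finset.sum_nonneg fun d hd => ?_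
    exact mul_nonneg (by positivity) (φnonneg d (Nat.pos_of_mem_divisors hd))
  have νbound : ∀ n, 1 ≤ n → ν n ≤ 2 * s ^ n := by
    intro n hn
    have hseq : Tendsto (fun i => A i n / g i - ((q : ℝ) ^ n + 1) / g i)
        atTop (nhds (ν n)) := by
      have := (hAg n).sub (hB n)
      rwa [sub_zero] at this
    refine le_of_tendsto hseq (Eventually.of_forall fun i => ?_)
    have e : A i n / g i - ((q : ℝ) ^ n + 1) / g i = (A i n - (q : ℝ) ^ n - 1) / g i := by
      rw [div_sub_div_same, sub_sub]
    rw [e]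
    calc (A i n - (q : ℝ) ^ n - 1) / g i ≤ |A i n - (q : ℝ) ^ n - 1| / g i := by
          gcongr
          exact le_abs_self _
    _ ≤ ((2 * g i : ℕ) * s ^ n) / g i := by
        gcongr
        exact key3 i n hn
    _ = 2 * s ^ n := by
        push_cast
        field_simp [(gpos i).ne']
  have φbound : ∀ d : ℕ, 1 ≤ d → (d : ℝ) * φ d ≤ 2 * s ^ d := by
    intro d hd
    refine le_trans ?_ (νbound d hd)
    rw [hν]
    refine Finset.single_le_sum (f := fun d' : ℕ => (d' : ℝ) * φ d')
      (fun d' hd' => mul_nonneg (by positivity) (φnonneg d' (Nat.pos_of_mem_divisors hd')))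
      (Nat.mem_divisors_self d (Nat.one_le_iff_ne_zero.mp hd))
  -- the double series
  set L : ℕ → ℝ := fun d => Real.log ((q : ℝ) ^ d / ((q : ℝ) ^ d - 1)) with hL
  set G2 : ℕ × ℕ → ℝ := fun p =>
    if p.1 = 0 then 0 else φ p.1 * (((q : ℝ) ^ p.1)⁻¹) ^ p.2 / p.2 with hG2
  have qd1 : ∀ d : ℕ, 1 ≤ d → (1 : ℝ) < (q : ℝ) ^ d := fun d hd =>
    one_lt_pow₀ hq1 (Nat.one_le_iff_ne_zero.mp hd)
  have hss : s * s⁻¹ = 1 := mul_inv_cancel₀ hs0.ne'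
  have G2zero : ∀ p : ℕ × ℕ, p.1 = 0 ∨ p.2 = 0 → G2 p = 0 := by
    rintro ⟨d, m⟩ hc
    simp only [hG2]
    rcases hc with rfl | rfl
    · simp
    · simp
  have G2nonneg : ∀ p : ℕ × ℕ, 0 ≤ G2 p := by
    rintro ⟨d, m⟩
    rcases Nat.eq_zero_or_pos d with rfl | hd
    · simp [hG2]
    · have := φnonneg d hd
      simp only [hG2, if_neg (Nat.one_le_iff_ne_zero.mp hd)]
      positivity
  have φd2 : ∀ d : ℕ, 1 ≤ d → φ d ≤ 2 * s ^ d := by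
    intro d hd
    have h1 := φbound d hd
    have h2 := φnonneg d hd
    have h3 : (1 : ℝ) ≤ (d : ℝ) := by exact_mod_cast hd
    nlinarith
  have G2bound : ∀ p : ℕ × ℕ,
      G2 p ≤ (2 * s * s⁻¹ ^ p.1) * s⁻¹ ^ p.2 := by
    rintro ⟨d, m⟩
    have hbpos : (0 : ℝ) ≤ (2 * s * s⁻¹ ^ d) * s⁻¹ ^ m := by positivity
    rcases Nat.eq_zero_or_pos d with rfl | hd
    · simpa [hG2] using hbpos
    rcases Nat.eq_zero_or_pos m with rfl | hm
    · have : G2 (d, 0) = 0 := G2zero (d, 0) (Or.inr rfl)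
      rw [this]; exact hbpos
    obtain ⟨d', rfl⟩ : ∃ d'', d = d'' + 1 := ⟨d - 1, by omega⟩
    obtain ⟨m', rfl⟩ : ∃ m'', m = m'' + 1 := ⟨m - 1, by omega⟩
    have hφd := φd2 (d' + 1) (by omega)
    have hφ0 := φnonneg (d' + 1) (by omega)
    have hx : (((q : ℝ) ^ (d' + 1))⁻¹) ^ (m' + 1) = s⁻¹ ^ (2 * (d' + 1) * (m' + 1)) := by
      rw [← hs2, ← pow_mul, ← inv_pow, ← pow_mul]
    have hsplit : 2 * (d' + 1) * (m' + 1)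
        = (d' + 1) + ((m' + 1) + (d' + (2 * d' + 1) * m')) := by ring
    have hm1 : (1 : ℝ) ≤ ((m' + 1 : ℕ) : ℝ) := by exact_mod_cast Nat.succ_le_succ (Nat.zero_le m')
    have hxnn : (0 : ℝ) ≤ (((q : ℝ) ^ (d' + 1))⁻¹) ^ (m' + 1) := by positivity
    calc G2 (d' + 1, m' + 1)
        = φ (d' + 1) * (((q : ℝ) ^ (d' + 1))⁻¹) ^ (m' + 1) / ((m' + 1 : ℕ) : ℝ) := by
          simp only [hG2]
          rw [if_neg (Nat.succ_ne_zero d')]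
    _ ≤ φ (d' + 1) * (((q : ℝ) ^ (d' + 1))⁻¹) ^ (m' + 1) / 1 := by
          rw [div_one, div_le_iff₀ (by positivity : (0:ℝ) < ((m' + 1 : ℕ) : ℝ))]
          nlinarith [mul_nonneg hφ0 hxnn, hm1]
    _ = φ (d' + 1) * (((q : ℝ) ^ (d' + 1))⁻¹) ^ (m' + 1) := div_one _
    _ ≤ (2 * s ^ (d' + 1)) * (((q : ℝ) ^ (d' + 1))⁻¹) ^ (m' + 1) := by gcongr
    _ = 2 * (s ^ (d' + 1) * s⁻¹ ^ (d' + 1)) * s⁻¹ ^ (m' + 1)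
          * s⁻¹ ^ (d' + (2 * d' + 1) * m') := by
          rw [hx, hsplit, pow_add, pow_add]
          ring
    _ = 2 * s⁻¹ ^ (m' + 1) * s⁻¹ ^ (d' + (2 * d' + 1) * m') := by
          rw [← mul_pow, hss, one_pow]
          ring
    _ ≤ 2 * s⁻¹ ^ (m' + 1) * s⁻¹ ^ d' :=
          mul_le_mul_of_nonneg_left
            (pow_le_pow_of_le_one hsinv0 hsinv.le (Nat.le_add_right d' _))
            (by positivity)
    _ = (2 * s * s⁻¹ ^ (d' + 1)) * s⁻¹ ^ (m' + 1) := by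
          rw [pow_succ]
          calc 2 * s⁻¹ ^ (m' + 1) * s⁻¹ ^ d'
              = (s * s⁻¹) * (2 * s⁻¹ ^ (m' + 1) * s⁻¹ ^ d') := by rw [hss, one_mul]
          _ = 2 * s * (s⁻¹ ^ d' * s⁻¹) * s⁻¹ ^ (m' + 1) := by ring
  have hGsum : Summable G2 := by
    have hb : Summable (fun p : ℕ × ℕ => (2 * s * s⁻¹ ^ p.1) * s⁻¹ ^ p.2) :=
      Summable.mul_of_nonneg (f := fun d : ℕ => 2 * s * s⁻¹ ^ d)
        (g := fun m : ℕ => s⁻¹ ^ m)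
        ((summable_geometric_of_lt_one hsinv0 hsinv).mul_left (2 * s))
        (summable_geometric_of_lt_one hsinv0 hsinv)
        (fun d => by positivity) (fun m => by positivity)
    exact Summable.of_nonneg_of_le G2nonneg G2bound hb
  have hfib := divisor_tsum_rearrange hGsum G2zero
  have hcG : (fun n : ℕ => ∑ d ∈ n.divisors, G2 (d, n / d)) = c := by
    funext n
    rcases Nat.eq_zero_or_pos n with rfl | hn
    · simp [hc, hν]
    · simp only [hc]
      rw [show ν n / ((n : ℝ) * (q : ℝ) ^ n) = ∑ d ∈ n.divisors,
          (d : ℝ) * φ d / ((n : ℝ) * (q : ℝ) ^ n) by rw [hν, Finset.sum_div]]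
      refine Finset.sum_congr rfl fun d hd => ?_
      obtain ⟨hdvd, hne⟩ := Nat.mem_divisors.mp hd
      have hd0 : d ≠ 0 := (Nat.pos_of_mem_divisors hd).ne'
      have hm0 : 0 < n / d := Nat.div_pos (Nat.le_of_dvd hn hdvd) (Nat.pos_of_mem_divisors hd)
      have hpow : (((q : ℝ) ^ d)⁻¹) ^ (n / d) = ((q : ℝ) ^ n)⁻¹ := by
        rw [← inv_pow, ← pow_mul, Nat.mul_div_cancel' hdvd, inv_pow]
      have hcastd : ((n / d : ℕ) : ℝ) = (n : ℝ) / (d : ℝ) :=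
        Nat.cast_div hdvd (by exact_mod_cast hd0)
      simp only [hG2]
      rw [if_neg hd0, hpow, hcastd]
      have hdR : (0 : ℝ) < (d : ℝ) := by exact_mod_cast Nat.pos_of_mem_divisors hd
      have hnR : (0 : ℝ) < (n : ℝ) := by exact_mod_cast hn
      have hqR : (0 : ℝ) < (q : ℝ) ^ n := by positivity
      field_simp
  have hcsum : HasSum c (∑' p, G2 p) := hcG ▸ hfib
  -- inner sums
  have hinner : ∀ d : ℕ, 1 ≤ d → HasSum (fun m => G2 (d, m)) (φ d * L d) := by
    intro d hd
    have hd0 : d ≠ 0 := Nat.one_le_iff_ne_zero.mp hd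
    have hx0 : (0 : ℝ) ≤ ((q : ℝ) ^ d)⁻¹ := by positivity
    have hx1 : ((q : ℝ) ^ d)⁻¹ < 1 := by
      rw [inv_lt_one_iff₀]; right; exact qd1 d hd
    have base := (real_log_series hx0 hx1).mul_left (φ d)
    have hval : φ d * -Real.log (1 - ((q : ℝ) ^ d)⁻¹) = φ d * L d := by
      congr 1
      have hq1d := qd1 d hd
      have h1 : (1 : ℝ) - ((q : ℝ) ^ d)⁻¹ = ((q : ℝ) ^ d - 1) / (q : ℝ) ^ d := by
        field_simp
      simp only [hL]
      rw [h1, Real.log_div (by linarith) (by positivity),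
        Real.log_div (by positivity) (by linarith)]
      ring
    rw [hval] at base
    refine base.congr_fun fun m => ?_
    simp only [hG2]
    rw [if_neg hd0]
    ring
  have hinner0 : ∀ m : ℕ, G2 (0, m) = 0 := fun m => G2zero (0, m) (Or.inl rfl)
  have hprod : ∑' p, G2 p = ∑' (d : ℕ), ∑' (m : ℕ), G2 (d, m) :=
    Summable.tsum_prod' hGsum fun d => hGsum.prod_factor d
  have hHval : (fun d : ℕ => ∑' m : ℕ, G2 (d, m))
      = fun d : ℕ => if d = 0 then 0 else φ d * L d := by
    funext d
    rcases Nat.eq_zero_or_pos d with rfl | hd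
    · simp [hinner0]
    · rw [if_neg (Nat.one_le_iff_ne_zero.mp hd)]
      exact (hinner d hd).tsum_eq
  have sumH : Summable (fun d : ℕ => if d = 0 then 0 else φ d * L d) := by
    rw [← hHval]
    exact hGsum.prod
  have sumH1 : Summable (fun r : ℕ => if r + 1 = 0 then (0:ℝ) else φ (r+1) * L (r+1)) :=
    (summable_nat_add_iff 1).2 sumH
  have hHsucc : (fun r : ℕ => if r + 1 = 0 then (0:ℝ) else φ (r+1) * L (r+1))
      = fun r : ℕ => φ (r + 1) * Real.log ((q : ℝ) ^ (r + 1) / ((q : ℝ) ^ (r + 1) - 1)) := by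
    funext r
    rw [if_neg (Nat.succ_ne_zero r), hL]
  have hsummable : Summable (fun r : ℕ =>
      φ (r + 1) * Real.log ((q : ℝ) ^ (r + 1) / ((q : ℝ) ^ (r + 1) - 1))) := by
    rw [← hHsucc]; exact sumH1
  refine ⟨hsummable, ?_⟩
  have hCval : ∑' n, c n
      = ∑' r : ℕ, φ (r + 1) * Real.log ((q : ℝ) ^ (r + 1) / ((q : ℝ) ^ (r + 1) - 1)) := by
    rw [hcsum.tsum_eq, hprod, hHval, Summable.tsum_eq_zero_add sumH, hHsucc]
    norm_num
  rw [← hCval]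
  exact HtendFinal
end
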